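/- Let G be a strongly topologically orderable gyrogroup and H a dense subgyrogroup of G. If G has a suitable set, then H also has a suitable set; moreover, if G has a closed suitable set, then so does H. -/

import Mathlib

open Set Topology

universe u

class Gyrogroup (G : Type u) where
  op : G → G → G
  one : G
  inv : G → G
  gyr : G → G → G ≃ G
  one_op : ∀ g, op one g = g
  op_one : ∀ g, op g one = g
  inv_op : ∀ g, op (inv g) g = one
  op_inv : ∀ g, op g (inv g) = one
  unique_one : ∀ e : G, (∀ g, op e g = g ∧ op g e = g) → e = one
  unique_inv : ∀ g h : G, (op h g = one ∧ op g h = one) → h = inv g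
  gyr_op : ∀ g h f, op g (op h f) = op (op g h) (gyr g h f)
  gyr_hom : ∀ g h a b, gyr g h (op a b) = op (gyr g h a) (gyr g h b)
  loop : ∀ g h, gyr g h = gyr (op g h) h

namespace Gyrogroup

variable {G : Type u} [Gyrogroup G]

/-- `H` is a subgyrogroup: nonempty and a gyrogroup under the restricted operations. -/
def IsSubgyrogroup (H : Set G) : Prop :=
  H.Nonempty ∧ one ∈ H ∧
  (∀ a ∈ H, ∀ b ∈ H, op a b ∈ H) ∧
  (∀ a ∈ H, inv a ∈ H) ∧
  (∀ a ∈ H, ∀ b ∈ H, Set.BijOn (gyr a b) H H)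

/-- `H` is an L-subgyrogroup: `gyr g h` fixes `H` setwise for every `g ∈ G`, `h ∈ H`. -/
def IsLSubgyrogroup (H : Set G) : Prop :=
  IsSubgyrogroup H ∧ ∀ g : G, ∀ h ∈ H, (gyr g h) '' H = H

def leftCoset (a : G) (H : Set G) : Set G := (fun h => op a h) '' H

/-- The subgyrogroup generated by `S`. -/
def generatedSubgyrogroup (S : Set G) : Set G :=
  ⋂₀ {H : Set G | IsSubgyrogroup H ∧ S ⊆ H}

/-- The gyrogroup operations are continuous (topological gyrogroup). -/
def ContinuousGyroOps (G : Type u) [Gyrogroup G] [TopologicalSpace G] : Prop :=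
  Continuous (fun p : G × G => op p.1 p.2) ∧ Continuous (inv : G → G)

/-- The topology coincides with the order topology of some linear order. -/
def TopologicallyOrderable (G : Type u) [t : TopologicalSpace G] : Prop :=
  ∃ l : LinearOrder G, t = TopologicalSpace.generateFrom
      {s : Set G | ∃ a : G, s = {x | l.lt a x} ∨ s = {x | l.lt x a}}

/-- A strongly topological gyrogroup: a topological gyrogroup with a neighborhood base
at `1` whose members are invariant under all gyroautomorphisms. -/
def StronglyTopologicalGyrogroup (G : Type u) [Gyrogroup G] [TopologicalSpace G] : Prop :=
  ContinuousGyroOps G ∧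
  ∃ 𝒰 : Set (Set G), (∀ U ∈ 𝒰, U ∈ nhds (one : G)) ∧
    (∀ V ∈ nhds (one : G), ∃ U ∈ 𝒰, U ⊆ V) ∧
    (∀ U ∈ 𝒰, ∀ x y : G, (gyr x y) '' U = U)

def StronglyTopologicallyOrderable (G : Type u) [Gyrogroup G] [TopologicalSpace G] : Prop :=
  StronglyTopologicalGyrogroup G ∧ TopologicallyOrderable G

end Gyrogroup

open Gyrogroup
/-- `S` is a suitable set for the subgyrogroup `H` (with the subspace structure):
`S ⊆ H`, `S` is discrete in itself, `S ∪ {1}` is closed in `H`, and the subgyrogroup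
generated by `S` is dense in `H`. -/
def Gyrogroup.IsSuitableSetIn {G : Type u} [Gyrogroup G] [TopologicalSpace G]
    (H S : Set G) : Prop :=
  S ⊆ H ∧ (∀ x ∈ S, ∃ U : Set G, IsOpen U ∧ U ∩ S = {x}) ∧
  (closure (S ∪ {one}) ∩ H ⊆ S ∪ {one}) ∧
  H ⊆ closure (generatedSubgyrogroup S)

namespace Gyrogroup

variable {G : Type u} [Gyrogroup G]

theorem op_left_cancel (a : G) {x y : G} (h : op a x = op a y) : x = y := by
  have hx : op (inv a) (op a x) = op (op (inv a) a) (gyr (inv a) a x) := gyr_op _ _ _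
  have hy : op (inv a) (op a y) = op (op (inv a) a) (gyr (inv a) a y) := gyr_op _ _ _
  rw [inv_op, one_op] at hx hy
  have : gyr (inv a) a x = gyr (inv a) a y := by rw [← hx, ← hy, h]
  exact (gyr (inv a) a).injective this

theorem gyr_one_left (a : G) (x : G) : gyr one a x = x := by
  have h : op one (op a x) = op (op one a) (gyr one a x) := gyr_op _ _ _
  rw [one_op, one_op] at h
  exact (op_left_cancel a h.symm)

theorem gyr_inv_left (a : G) (x : G) : gyr (inv a) a x = x := by
  have : gyr (inv a) a = gyr (op (inv a) a) a := loop _ _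
  rw [this, inv_op, gyr_one_left]

theorem gyr_inv_right (a : G) (x : G) : gyr a (inv a) x = x := by
  have : gyr a (inv a) = gyr (op a (inv a)) (inv a) := loop _ _
  rw [this, op_inv, gyr_one_left]

theorem inv_op_cancel_left (a x : G) : op (inv a) (op a x) = x := by
  have hx : op (inv a) (op a x) = op (op (inv a) a) (gyr (inv a) a x) := gyr_op _ _ _
  rw [inv_op, one_op, gyr_inv_left] at hx
  exact hx

theorem op_inv_cancel_left (a x : G) : op a (op (inv a) x) = x := by
  have hx : op a (op (inv a) x) = op (op a (inv a)) (gyr a (inv a) x) := gyr_op _ _ _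
  rw [op_inv, one_op, gyr_inv_right] at hx
  exact hx

theorem inv_inv (a : G) : inv (inv a) = a :=
  (unique_inv (inv a) a ⟨op_inv a, inv_op a⟩).symm

theorem inv_one : (inv one : G) = one :=
  (unique_inv one one ⟨one_op one, one_op one⟩).symm

theorem inv_injective : Function.Injective (inv : G → G) := by
  intro a b h
  rw [← inv_inv a, h, inv_inv]

theorem eq_inv_op_of_op_eq {a x y : G} (h : op a x = y) : x = op (inv a) y := by
  rw [← h, inv_op_cancel_left]

theorem gyr_eq_formula (a b x : G) :
    gyr a b x = op (inv (op a b)) (op a (op b x)) := by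
  rw [gyr_op a b x, inv_op_cancel_left]

theorem gyr_one (a b : G) : gyr a b one = one := by
  have h := gyr_hom a b one one
  rw [one_op] at h
  have : op (gyr a b one) one = op (gyr a b one) (gyr a b one) := by
    rw [op_one]; exact h
  exact (op_left_cancel _ this).symm

theorem gyr_inv (a b x : G) : gyr a b (inv x) = inv (gyr a b x) := by
  apply unique_inv
  constructor
  · rw [← gyr_hom, inv_op, gyr_one]
  · rw [← gyr_hom, op_inv, gyr_one]

/-- inverse formula for gyr -/
theorem gyr_inv_formula (a b x : G) :
    op (inv b) (op (inv a) (op (op a b) (gyr a b x))) = x := by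
  rw [← gyr_op a b x, inv_op_cancel_left, inv_op_cancel_left]

theorem one_op_self (a : G) : op one a = a := one_op a

/-- left translation as an equiv -/
def lmul (a : G) : Equiv.Perm G where
  toFun := op a
  invFun := op (inv a)
  left_inv := fun x => inv_op_cancel_left a x
  right_inv := fun x => op_inv_cancel_left a x

@[simp] theorem lmul_apply (a x : G) : lmul a x = op a x := rfl
@[simp] theorem lmul_symm_apply (a x : G) : (lmul a).symm x = op (inv a) x := rfl

end Gyrogroup
namespace Gyrogroup

variable {G : Type u} [Gyrogroup G] [TopologicalSpace G]

section Cont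
variable (hc : ContinuousGyroOps G)
include hc

theorem continuous_op2 : Continuous fun p : G × G => op p.1 p.2 := hc.1

theorem continuous_lmul (a : G) : Continuous (op a : G → G) :=
  hc.1.comp (continuous_const.prodMk continuous_id)

theorem continuous_rmul (b : G) : Continuous (fun x => op x b : G → G) :=
  hc.1.comp (continuous_id.prodMk continuous_const)

/-- left translation homeomorphism -/
noncomputable def lmulHomeo (a : G) : Homeomorph G G where
  toEquiv := lmul a
  continuous_toFun := continuous_lmul hc a
  continuous_invFun := continuous_lmul hc (inv a)

theorem isOpen_lmul_image {a : G} {U : Set G} (hU : IsOpen U) :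
    IsOpen ((fun x => op a x) '' U) := by
  have := (lmulHomeo hc a).isOpenMap U hU
  simpa [lmulHomeo, lmul] using this

theorem lmul_image_mem_nhds {a : G} {V : Set G} (hV : V ∈ nhds (one : G)) :
    (fun x => op a x) '' V ∈ nhds a := by
  have h := (lmulHomeo hc a).isOpenMap.image_mem_nhds (x := (one : G)) hV
  have : lmulHomeo hc a one = a := by simp [lmulHomeo, lmul, op_one]
  rw [this] at h
  simpa [lmulHomeo, lmul] using h

theorem continuous_gyr (a b : G) : Continuous (fun x => gyr a b x : G → G) := by
  have : (fun x => gyr a b x : G → G)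
      = fun x => op (inv (op a b)) (op a (op b x)) := by
    funext x; exact gyr_eq_formula a b x
  rw [this]
  exact (continuous_lmul hc _).comp ((continuous_lmul hc _).comp (continuous_lmul hc _))

theorem continuous_gyr_symm (a b : G) : Continuous (fun x => (gyr a b).symm x : G → G) := by
  have key : ∀ x, (gyr a b).symm x = op (inv b) (op (inv a) (op (op a b) x)) := by
    intro x
    have := gyr_inv_formula a b ((gyr a b).symm x)
    rw [Equiv.apply_symm_apply] at this
    exact this.symm
  have : (fun x => (gyr a b).symm x : G → G)
      = fun x => op (inv b) (op (inv a) (op (op a b) x)) := funext key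
  rw [this]
  exact (continuous_lmul hc _).comp ((continuous_lmul hc _).comp (continuous_lmul hc _))

theorem continuous_gyr3 : Continuous (fun p : G × G × G => gyr p.1 p.2.1 p.2.2) := by
  have : (fun p : G × G × G => gyr p.1 p.2.1 p.2.2)
      = fun p : G × G × G =>
        op (inv (op p.1 p.2.1)) (op p.1 (op p.2.1 p.2.2)) := by
    funext p; exact gyr_eq_formula _ _ _
  rw [this]
  have c1 : Continuous fun p : G × G × G => p.1 := continuous_fst
  have c2 : Continuous fun p : G × G × G => p.2.1 := continuous_snd.fst
  have c3 : Continuous fun p : G × G × G => p.2.2 := continuous_snd.snd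
  have cop : ∀ {f g : G × G × G → G}, Continuous f → Continuous g →
      Continuous (fun p => op (f p) (g p)) := by
    intro f g hf hg
    exact hc.1.comp (hf.prodMk hg)
  exact cop (hc.2.comp (cop c1 c2)) (cop c1 (cop c2 c3))

end Cont

end Gyrogroup
namespace Gyrogroup

variable {G : Type u} [Gyrogroup G]

theorem isSubgyrogroup_univ : IsSubgyrogroup (Set.univ : Set G) := by
  refine ⟨⟨one, trivial⟩, trivial, fun _ _ _ _ => trivial, fun _ _ => trivial, ?_⟩
  intro a _ b _
  exact ⟨fun _ _ => trivial, fun x _ y _ h => (gyr a b).injective h,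
    fun x _ => ⟨(gyr a b).symm x, trivial, Equiv.apply_symm_apply _ _⟩⟩

theorem subset_generatedSubgyrogroup (S : Set G) : S ⊆ generatedSubgyrogroup S := by
  intro x hx K hK
  exact hK.2 hx

theorem generatedSubgyrogroup_subset {S K : Set G} (hK : IsSubgyrogroup K) (h : S ⊆ K) :
    generatedSubgyrogroup S ⊆ K :=
  fun _ hx => hx K ⟨hK, h⟩

theorem isSubgyrogroup_generated (S : Set G) : IsSubgyrogroup (generatedSubgyrogroup S) := by
  have hmem : ∀ x, x ∈ generatedSubgyrogroup S ↔
      ∀ K : Set G, IsSubgyrogroup K ∧ S ⊆ K → x ∈ K := by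
    intro x; exact Set.mem_sInter
  constructor
  · exact ⟨one, by rw [hmem]; exact fun K hK => hK.1.2.1⟩
  refine ⟨by rw [hmem]; exact fun K hK => hK.1.2.1, ?_, ?_, ?_⟩
  · intro a ha b hb
    rw [hmem] at *
    exact fun K hK => hK.1.2.2.1 a (ha K hK) b (hb K hK)
  · intro a ha
    rw [hmem] at *
    exact fun K hK => hK.1.2.2.2.1 a (ha K hK)
  · intro a ha b hb
    refine ⟨?_, fun x _ y _ h => (gyr a b).injective h, ?_⟩
    · intro x hx
      rw [hmem] at *
      exact fun K hK => (hK.1.2.2.2.2 a (ha K hK) b (hb K hK)).mapsTo (hx K hK)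
    · intro x hx
      refine ⟨(gyr a b).symm x, ?_, Equiv.apply_symm_apply _ _⟩
      rw [hmem] at *
      intro K hK
      obtain ⟨y, hy, hxy⟩ := (hK.1.2.2.2.2 a (ha K hK) b (hb K hK)).surjOn (hx K hK)
      have : y = (gyr a b).symm x := by
        rw [← hxy, Equiv.symm_apply_apply]
      rwa [← this]

variable [TopologicalSpace G]

theorem isSubgyrogroup_closure (hc : ContinuousGyroOps G) {K : Set G}
    (hK : IsSubgyrogroup K) : IsSubgyrogroup (closure K) := by
  have hone : (one : G) ∈ closure K := subset_closure hK.2.1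
  refine ⟨⟨one, hone⟩, hone, ?_, ?_, ?_⟩
  · intro a ha b hb
    exact map_mem_closure₂ hc.1 ha hb (fun x hx y hy => hK.2.2.1 x hx y hy)
  · intro a ha
    exact map_mem_closure hc.2 ha (fun x hx => hK.2.2.2.1 x hx)
  · intro a ha b hb
    have hmaps : ∀ x ∈ closure K, gyr a b x ∈ closure K := by
      intro x hx
      have h3 : (a, b, x) ∈ closure (K ×ˢ (K ×ˢ K)) := by
        rw [closure_prod_eq, closure_prod_eq]
        exact ⟨ha, hb, hx⟩
      have := map_mem_closure (continuous_gyr3 hc) h3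
        (fun p hp => (hK.2.2.2.2 p.1 hp.1 p.2.1 hp.2.1).mapsTo hp.2.2)
      exact this
    refine ⟨hmaps, fun x _ y _ h => (gyr a b).injective h, ?_⟩
    · -- surjectivity via the inverse formula
      intro x hx
      refine ⟨(gyr a b).symm x, ?_, Equiv.apply_symm_apply _ _⟩
      have hsymm_eq : ∀ u v w : G, (gyr u v).symm w = op (inv v) (op (inv u) (op (op u v) w)) := by
        intro u v w
        have := gyr_inv_formula u v ((gyr u v).symm w)
        rw [Equiv.apply_symm_apply] at this
        exact this.symm
      have hcont : Continuous (fun p : G × G × G => (gyr p.1 p.2.1).symm p.2.2) := by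
        have : (fun p : G × G × G => (gyr p.1 p.2.1).symm p.2.2)
            = fun p : G × G × G => op (inv p.2.1) (op (inv p.1) (op (op p.1 p.2.1) p.2.2)) := by
          funext p; exact hsymm_eq _ _ _
        rw [this]
        have c1 : Continuous fun p : G × G × G => p.1 := continuous_fst
        have c2 : Continuous fun p : G × G × G => p.2.1 := continuous_snd.fst
        have c3 : Continuous fun p : G × G × G => p.2.2 := continuous_snd.snd
        have cop : ∀ {f g : G × G × G → G}, Continuous f → Continuous g →
            Continuous (fun p => op (f p) (g p)) := fun hf hg => hc.1.comp (hf.prodMk hg)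
        exact cop (hc.2.comp c2) (cop (hc.2.comp c1) (cop (cop c1 c2) c3))
      have h3 : (a, b, x) ∈ closure (K ×ˢ (K ×ˢ K)) := by
        rw [closure_prod_eq, closure_prod_eq]
        exact ⟨ha, hb, hx⟩
      have hmt : ∀ p : G × G × G, p ∈ K ×ˢ (K ×ˢ K) → (gyr p.1 p.2.1).symm p.2.2 ∈ K := by
        intro p hp
        obtain ⟨y, hy, hxy⟩ := (hK.2.2.2.2 p.1 hp.1 p.2.1 hp.2.1).surjOn hp.2.2
        have : y = (gyr p.1 p.2.1).symm p.2.2 := by rw [← hxy, Equiv.symm_apply_apply]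
        rwa [← this]
      simpa using map_mem_closure hcont h3 hmt

end Gyrogroup
namespace Gyrogroup

variable {G : Type u} [Gyrogroup G]

/-- A fully gyr-invariant subgyrogroup. -/
structure IsNiceSub (P : Set G) : Prop where
  one_mem : (one : G) ∈ P
  op_mem : ∀ p ∈ P, ∀ q ∈ P, op p q ∈ P
  inv_mem : ∀ p ∈ P, inv p ∈ P
  gyr_fix : ∀ x y : G, gyr x y '' P = P

theorem mem_leftCoset_iff {P : Set G} {a z : G} :
    z ∈ leftCoset a P ↔ ∃ p ∈ P, op a p = z := by
  constructor
  · rintro ⟨p, hp, rfl⟩; exact ⟨p, hp, rfl⟩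
  · rintro ⟨p, hp, rfl⟩; exact ⟨p, hp, rfl⟩

theorem op_mem_leftCoset {P : Set G} {a p : G} (hp : p ∈ P) : op a p ∈ leftCoset a P :=
  ⟨p, hp, rfl⟩

namespace IsNiceSub

variable {P : Set G}

theorem gyr_mem (hP : IsNiceSub P) (x y : G) {p : G} (hp : p ∈ P) : gyr x y p ∈ P := by
  rw [← hP.gyr_fix x y]
  exact ⟨p, hp, rfl⟩

theorem gyr_symm_mem (hP : IsNiceSub P) (x y : G) {p : G} (hp : p ∈ P) :
    (gyr x y).symm p ∈ P := by
  rw [← hP.gyr_fix x y] at hp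
  obtain ⟨q, hq, hqp⟩ := hp
  have : q = (gyr x y).symm p := by rw [← hqp, Equiv.symm_apply_apply]
  rwa [← this]

theorem mem_coset_self (hP : IsNiceSub P) (a : G) : a ∈ leftCoset a P :=
  ⟨one, hP.one_mem, op_one a⟩

theorem coset_subset_of_mem (hP : IsNiceSub P) {a b : G} (hb : b ∈ leftCoset a P) :
    leftCoset b P ⊆ leftCoset a P := by
  obtain ⟨p, hp, hbp⟩ := mem_leftCoset_iff.mp hb
  intro z hz
  obtain ⟨r, hr, hrz⟩ := mem_leftCoset_iff.mp hz
  rw [mem_leftCoset_iff]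
  refine ⟨op p ((gyr a p).symm r), hP.op_mem p hp _ (hP.gyr_symm_mem a p hr), ?_⟩
  have h := gyr_op a p ((gyr a p).symm r)
  rw [Equiv.apply_symm_apply, hbp] at h
  rw [h, hrz]

theorem mem_coset_symm (hP : IsNiceSub P) {a b : G} (hb : b ∈ leftCoset a P) :
    a ∈ leftCoset b P := by
  obtain ⟨p, hp, hbp⟩ := mem_leftCoset_iff.mp hb
  rw [mem_leftCoset_iff]
  refine ⟨gyr a p (inv p), hP.gyr_mem a p (hP.inv_mem p hp), ?_⟩
  have h := gyr_op a p (inv p)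
  rw [op_inv, op_one, hbp] at h
  exact h.symm

theorem coset_eq_of_mem (hP : IsNiceSub P) {a b : G} (hb : b ∈ leftCoset a P) :
    leftCoset b P = leftCoset a P :=
  Set.Subset.antisymm (hP.coset_subset_of_mem hb)
    (hP.coset_subset_of_mem (hP.mem_coset_symm hb))

theorem coset_eq_of_inter (hP : IsNiceSub P) {a b : G}
    (h : (leftCoset a P ∩ leftCoset b P).Nonempty) :
    leftCoset a P = leftCoset b P := by
  obtain ⟨z, hza, hzb⟩ := h
  rw [← hP.coset_eq_of_mem hza, hP.coset_eq_of_mem hzb]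

variable [TopologicalSpace G]

theorem isOpen_of_interior (hP : IsNiceSub P) (hc : ContinuousGyroOps G)
    (h : (interior P).Nonempty) : IsOpen P := by
  obtain ⟨x0, hx0⟩ := h
  have hx0P : x0 ∈ P := interior_subset hx0
  rw [isOpen_iff_mem_nhds]
  intro p hp
  have h1 : (fun x => op (inv x0) x) '' P ∈ nhds (one : G) := by
    have := (lmulHomeo hc (inv x0)).isOpenMap.image_mem_nhds
      (x := x0) (mem_interior_iff_mem_nhds.mp hx0)
    have he : lmulHomeo hc (inv x0) x0 = one := by
      simp [lmulHomeo, lmul, inv_op]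
    rw [he] at this
    simpa [lmulHomeo, lmul] using this
  have h2 : (fun x => op p x) '' ((fun x => op (inv x0) x) '' P) ∈ nhds p :=
    lmul_image_mem_nhds hc h1
  refine Filter.mem_of_superset h2 ?_
  rintro _ ⟨_, ⟨y, hy, rfl⟩, rfl⟩
  exact hP.op_mem p hp _ (hP.op_mem _ (hP.inv_mem x0 hx0P) y hy)

theorem coset_isOpen (hc : ContinuousGyroOps G) (hPo : IsOpen P) (a : G) :
    IsOpen (leftCoset a P) :=
  isOpen_lmul_image hc hPo

theorem coset_isClosed (hP : IsNiceSub P) (hc : ContinuousGyroOps G) (hPo : IsOpen P) (a : G) :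
    IsClosed (leftCoset a P) := by
  rw [← isOpen_compl_iff, isOpen_iff_mem_nhds]
  intro y hy
  have hyc : leftCoset y P ∈ nhds y :=
    (coset_isOpen hc hPo y).mem_nhds (hP.mem_coset_self y)
  refine Filter.mem_of_superset hyc ?_
  intro z hz hza
  have heq := hP.coset_eq_of_inter ⟨z, hza, hz⟩
  apply hy
  rw [heq]
  exact hP.mem_coset_self y

end IsNiceSub

end Gyrogroup
namespace Gyrogroup

variable {G : Type u} [Gyrogroup G] [TopologicalSpace G]

/-- The hypothesis package of a strongly topological gyrogroup base. -/
def GyrBase (𝒰 : Set (Set G)) : Prop :=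
  (∀ U ∈ 𝒰, U ∈ nhds (one : G)) ∧
    (∀ V ∈ nhds (one : G), ∃ U ∈ 𝒰, U ⊆ V) ∧
    (∀ U ∈ 𝒰, ∀ x y : G, (gyr x y) '' U = U)

theorem inv_image_eq_preimage (U : Set G) : inv '' U = inv ⁻¹' U := by
  ext x
  constructor
  · rintro ⟨y, hy, rfl⟩; simpa [inv_inv] using hy
  · intro hx; exact ⟨inv x, hx, inv_inv x⟩

theorem inv_image_mem_nhds (hc : ContinuousGyroOps G) {U : Set G}
    (hU : U ∈ nhds (one : G)) : inv '' U ∈ nhds (one : G) := by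
  rw [inv_image_eq_preimage]
  have := hc.2.continuousAt (x := (one : G))
  rw [ContinuousAt, inv_one] at this
  exact this hU

theorem shrink_lemma (hc : ContinuousGyroOps G) {𝒰 : Set (Set G)} (hB : GyrBase 𝒰)
    {W : Set G} (hW : W ∈ nhds (one : G)) :
    ∃ V : Set G, V ∈ nhds (one : G) ∧ V ⊆ W ∧ inv '' V = V ∧
      (∀ x y : G, gyr x y '' V = V) ∧ (∀ p ∈ V, ∀ q ∈ V, op p q ∈ W) := by
  -- continuity of op at (1,1)
  have hcont : {p : G × G | op p.1 p.2 ∈ W} ∈ nhds ((one : G), (one : G)) := by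
    have h1 : op (one : G) one = one := one_op one
    have := hc.1.continuousAt (x := ((one : G), (one : G)))
    rw [ContinuousAt] at this
    simp only [h1] at this
    exact this hW
  rw [mem_nhds_prod_iff] at hcont
  obtain ⟨V₁, hV₁, V₂, hV₂, hprod⟩ := hcont
  have hO : V₁ ∩ V₂ ∈ nhds (one : G) := Filter.inter_mem hV₁ hV₂
  -- symmetric shrink
  have hO' : V₁ ∩ V₂ ∩ inv ⁻¹' (V₁ ∩ V₂) ∈ nhds (one : G) := by
    refine Filter.inter_mem hO ?_
    have := hc.2.continuousAt (x := (one : G))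
    rw [ContinuousAt, inv_one] at this
    exact this hO
  obtain ⟨U, hU𝒰, hUsub⟩ := hB.2.1 _ hO'
  have hUnhds : U ∈ nhds (one : G) := hB.1 U hU𝒰
  refine ⟨U ∩ inv '' U, Filter.inter_mem hUnhds (inv_image_mem_nhds hc hUnhds), ?_, ?_, ?_, ?_⟩
  · -- ⊆ W : via p ∈ V₁, q := one? direct: V ⊆ V₁∩V₂ ⊆ ?? W contains V₁×V₂ products: p∈V: op p one?? 
    -- simpler: p ∈ V ⊆ V₁, and one ∈ V₂; op p one = p ∈ W
    intro p hp
    have hpV₁ : p ∈ V₁ := (hUsub hp.1).1.1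
    have hone : (one : G) ∈ V₂ := mem_of_mem_nhds hV₂
    have := hprod (Set.mk_mem_prod hpV₁ hone)
    simpa [op_one] using this
  · -- symmetric
    have hinv : ∀ X Y : Set G, inv '' (X ∩ Y) = inv '' X ∩ inv '' Y :=
      fun X Y => Set.image_inter inv_injective
    rw [hinv]
    rw [Set.inter_comm]
    congr 1
    · rw [inv_image_eq_preimage, inv_image_eq_preimage]
      ext x; simp [inv_inv]
  · -- gyr invariant
    intro x y
    have himg : gyr x y '' (U ∩ inv '' U) = gyr x y '' U ∩ gyr x y '' (inv '' U) :=
      Set.image_inter (gyr x y).injective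
    rw [himg, hB.2.2 U hU𝒰 x y]
    congr 1
    have hcomm : gyr x y '' (inv '' U) = inv '' (gyr x y '' U) := by
      ext z
      constructor
      · rintro ⟨_, ⟨u, hu, rfl⟩, rfl⟩
        exact ⟨gyr x y u, ⟨u, hu, rfl⟩, (gyr_inv x y u).symm⟩
      · rintro ⟨_, ⟨u, hu, rfl⟩, rfl⟩
        exact ⟨inv u, ⟨u, hu, rfl⟩, gyr_inv x y u⟩
    rw [hcomm, hB.2.2 U hU𝒰 x y]
  · -- products in W
    intro p hp q hq
    have hp1 : p ∈ V₁ := (hUsub hp.1).1.1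
    have hq2 : q ∈ V₂ := (hUsub hq.1).1.2
    exact hprod (Set.mk_mem_prod hp1 hq2)

/-- A nice subgroup inside any neighborhood of 1, expressed as a countable
intersection of neighborhoods of 1. -/
theorem exists_nice_inter (hc : ContinuousGyroOps G) {𝒰 : Set (Set G)} (hB : GyrBase 𝒰)
    {W : Set G} (hW : W ∈ nhds (one : G)) :
    ∃ V : ℕ → Set G, (∀ n, V n ∈ nhds (one : G)) ∧ IsNiceSub (⋂ n, V n) ∧ (⋂ n, V n) ⊆ W := by
  -- recursive shrinking
  have step : ∀ X : Set G, X ∈ nhds (one : G) →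
      ∃ V : Set G, V ∈ nhds (one : G) ∧ V ⊆ X ∧ inv '' V = V ∧
        (∀ x y : G, gyr x y '' V = V) ∧ (∀ p ∈ V, ∀ q ∈ V, op p q ∈ X) :=
    fun X hX => shrink_lemma hc hB hX
  choose f hf1 hf2 hf3 hf4 hf5 using step
  let g : ℕ → {X : Set G // X ∈ nhds (one : G)} := fun n =>
    Nat.rec ⟨f W hW, hf1 W hW⟩ (fun _ prev => ⟨f prev.1 prev.2, hf1 prev.1 prev.2⟩) n
  have hg_succ : ∀ n, (g (n + 1)).1 = f (g n).1 (g n).2 := fun n => rfl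
  have hg_zero : (g 0).1 = f W hW := rfl
  have hgf : ∀ n, ∃ X hX, (g n).1 = f X hX := by
    intro n
    cases n with
    | zero => exact ⟨W, hW, rfl⟩
    | succ m => exact ⟨(g m).1, (g m).2, rfl⟩
  refine ⟨fun n => (g n).1, fun n => (g n).2, ?_, ?_⟩
  · constructor
    · exact Set.mem_iInter.mpr fun n => mem_of_mem_nhds (g n).2
    · intro p hp q hq
      rw [Set.mem_iInter] at *
      intro n
      have hp' : p ∈ (g (n + 1)).1 := hp (n + 1)
      have hq' : q ∈ (g (n + 1)).1 := hq (n + 1)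
      rw [hg_succ n] at hp' hq'
      exact hf5 (g n).1 (g n).2 p hp' q hq'
    · intro p hp
      rw [Set.mem_iInter] at *
      intro n
      obtain ⟨X, hX, hEq⟩ := hgf n
      have hp' : p ∈ (g n).1 := hp n
      rw [hEq] at hp' ⊢
      rw [← hf3 X hX]
      exact ⟨p, hp', rfl⟩
    · intro x y
      have himg : ∀ n : ℕ, gyr x y '' (g n).1 = (g n).1 := by
        intro n
        obtain ⟨X, hX, hEq⟩ := hgf n
        rw [hEq]
        exact hf4 X hX x y
      rw [Set.image_iInter (gyr x y).bijective]
      exact Set.iInter_congr himg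
  · intro p hp
    rw [Set.mem_iInter] at hp
    have := hp 0
    rw [hg_zero] at this
    exact hf2 W hW this

end Gyrogroup
namespace Gyrogroup

variable {G : Type u} [Gyrogroup G] [TopologicalSpace G] [LinearOrder G] [OrderTopology G]

theorem mem_leftCoset_iff_op_inv {P : Set G} {a y : G} :
    y ∈ leftCoset a P ↔ op (inv a) y ∈ P := by
  constructor
  · rintro ⟨p, hp, rfl⟩
    simpa [inv_op_cancel_left] using hp
  · intro h
    exact ⟨op (inv a) y, h, op_inv_cancel_left a y⟩

/-- ord-connected open neighbourhoods form a basis. -/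
theorem exists_ordConnected_nbhd {y : G} {O : Set G} (hO : O ∈ nhds y) :
    ∃ J : Set G, IsOpen J ∧ y ∈ J ∧ J.OrdConnected ∧ J ⊆ O := by
  by_cases hl : ∃ l, l < y
  · by_cases hu : ∃ u, y < u
    · obtain ⟨a, b, hab, hsub⟩ := mem_nhds_iff_exists_Ioo_subset' hl hu |>.mp hO
      exact ⟨Set.Ioo a b, isOpen_Ioo, hab, Set.ordConnected_Ioo, hsub⟩
    · -- no points above y
      obtain ⟨c, hc, hsub⟩ := exists_Ioc_subset_of_mem_nhds hO hl
      refine ⟨Set.Ioi c, isOpen_Ioi, hc, Set.ordConnected_Ioi, ?_⟩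
      intro x hx
      have hxy : x ≤ y := not_lt.mp (fun h => hu ⟨x, h⟩)
      exact hsub ⟨hx, hxy⟩
  · by_cases hu : ∃ u, y < u
    · obtain ⟨d, hd, hsub⟩ := exists_Ico_subset_of_mem_nhds hO hu
      refine ⟨Set.Iio d, isOpen_Iio, hd, Set.ordConnected_Iio, ?_⟩
      intro x hx
      have hxy : y ≤ x := not_lt.mp (fun h => hl ⟨x, h⟩)
      exact hsub ⟨hxy, hx⟩
    · refine ⟨Set.univ, isOpen_univ, trivial, Set.ordConnected_univ, ?_⟩
      intro x _
      have : x = y := le_antisymm (not_lt.mp (fun h => hu ⟨x, h⟩))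
        (not_lt.mp (fun h => hl ⟨x, h⟩))
      rw [this]
      exact mem_of_mem_nhds hO

section Subgroup

variable {𝒰 : Set (Set G)}

/-- countable non-cofinality below `s` -/
def NoCountCofinal (s : G) : Prop :=
  ∀ D : Set G, D.Countable → (∀ d ∈ D, d < s) → ∃ z, z < s ∧ ∀ d ∈ D, d < z

theorem NoCountCofinal.lt_trans_exists {s : G} (hcc : NoCountCofinal s) {z : G} (hz : z < s) :
    ∃ w, z < w ∧ w < s := by
  obtain ⟨w, hw, hwz⟩ := hcc {z} (Set.countable_singleton z) (by simpa using hz)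
  exact ⟨w, hwz z rfl, hw⟩

theorem exists_nice_open_subgroup (hc : ContinuousGyroOps G) (hB : GyrBase 𝒰)
    {s : G} (hcc : NoCountCofinal s) (hne : ∃ w, w < s)
    {W : Set G} (hW : W ∈ nhds (one : G)) :
    ∃ P : Set G, IsNiceSub P ∧ IsOpen P ∧ P ⊆ W := by
  obtain ⟨V, hVn, hNice, hVW⟩ := exists_nice_inter hc hB hW
  set P := ⋂ n, V n with hP
  have hcoset_nhds : ∀ n, leftCoset s (V n) ∈ nhds s := by
    intro n
    have := lmul_image_mem_nhds hc (a := s) (hVn n)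
    exact this
  have hIoc : ∀ n : ℕ, ∃ c, c < s ∧ Set.Ioc c s ⊆ leftCoset s (V n) := by
    intro n
    obtain ⟨c, hc, hsub⟩ := exists_Ioc_subset_of_mem_nhds (hcoset_nhds n) hne
    exact ⟨c, hc, hsub⟩
  choose c hclt hcsub using hIoc
  obtain ⟨z, hzs, hzbound⟩ := hcc (Set.range c) (Set.countable_range c)
    (by rintro d ⟨n, rfl⟩; exact hclt n)
  obtain ⟨w, hzw, hws⟩ := hcc.lt_trans_exists hzs
  -- Ioo z s ⊆ leftCoset s P
  have hIoo : Set.Ioo z s ⊆ leftCoset s P := by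
    intro u hu
    rw [mem_leftCoset_iff_op_inv]
    rw [Set.mem_iInter]
    intro n
    have hu' : u ∈ leftCoset s (V n) := by
      apply hcsub n
      exact ⟨lt_of_lt_of_le (hzbound (c n) ⟨n, rfl⟩) (le_of_lt hu.1), le_of_lt hu.2⟩
    rwa [mem_leftCoset_iff_op_inv] at hu'
  have hint : (interior P).Nonempty := by
    have hopen : IsOpen ((fun x => op (inv s) x) '' Set.Ioo z s) := isOpen_lmul_image hc isOpen_Ioo
    have hsubP : (fun x => op (inv s) x) '' Set.Ioo z s ⊆ P := by
      rintro _ ⟨u, hu, rfl⟩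
      have := hIoo hu
      rwa [mem_leftCoset_iff_op_inv] at this
    have hne' : ((fun x => op (inv s) x) '' Set.Ioo z s).Nonempty :=
      ⟨op (inv s) w, ⟨w, ⟨hzw, hws⟩, rfl⟩⟩
    obtain ⟨x, hx⟩ := hne'
    exact ⟨x, interior_maximal hsubP hopen hx⟩
  exact ⟨P, hNice, hNice.isOpen_of_interior hc hint, hVW⟩

theorem exists_nice_coset_in_nbhd (hc : ContinuousGyroOps G) (hB : GyrBase 𝒰)
    {s : G} (hcc : NoCountCofinal s) (hne : ∃ w, w < s)
    {N : Set G} (hN : N ∈ nhds s) :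
    ∃ P : Set G, IsNiceSub P ∧ IsOpen P ∧ leftCoset s P ⊆ N := by
  have hW : (fun x => op (inv s) x) '' N ∈ nhds (one : G) := by
    have := (lmulHomeo hc (inv s)).isOpenMap.image_mem_nhds (x := s) hN
    have he : lmulHomeo hc (inv s) s = one := by simp [lmulHomeo, lmul, inv_op]
    rw [he] at this
    simpa [lmulHomeo, lmul] using this
  obtain ⟨P, hNice, hOpen, hPW⟩ := exists_nice_open_subgroup hc hB hcc hne hW
  refine ⟨P, hNice, hOpen, ?_⟩
  rintro _ ⟨p, hp, rfl⟩
  obtain ⟨y, hy, hyp⟩ := hPW hp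
  have hyp' : op (inv s) y = p := hyp
  have hsp : op s p = y := by rw [← hyp', op_inv_cancel_left]
  show op s p ∈ N
  rwa [hsp]

end Subgroup

end Gyrogroup
namespace Gyrogroup

variable {G : Type u} [Gyrogroup G] [TopologicalSpace G] [LinearOrder G] [OrderTopology G]

theorem isNiceSub_univ : IsNiceSub (Set.univ : Set G) :=
  ⟨trivial, fun _ _ _ _ => trivial, fun _ _ => trivial,
    fun x y => by rw [Set.image_univ]; exact (gyr x y).surjective.range_eq⟩

theorem isNiceSub_iInter {ι : Sort*} {f : ι → Set G} (h : ∀ i, IsNiceSub (f i)) :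
    IsNiceSub (⋂ i, f i) := by
  refine ⟨Set.mem_iInter.mpr fun i => (h i).one_mem, ?_, ?_, ?_⟩
  · intro p hp q hq
    exact Set.mem_iInter.mpr fun i =>
      (h i).op_mem p (Set.mem_iInter.mp hp i) q (Set.mem_iInter.mp hq i)
  · intro p hp
    exact Set.mem_iInter.mpr fun i => (h i).inv_mem p (Set.mem_iInter.mp hp i)
  · intro x y
    rw [Set.image_iInter (gyr x y).bijective]
    exact Set.iInter_congr fun i => (h i).gyr_fix x y

theorem leftCoset_iInter {ι : Sort*} {f : ι → Set G} (a : G) :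
    leftCoset a (⋂ i, f i) = ⋂ i, leftCoset a (f i) := by
  ext z
  simp only [Set.mem_iInter, mem_leftCoset_iff_op_inv]

/-- The transfinite construction, giving the key one-sided discrete set,
in the case where no countable set is cofinal from the left at `s`. -/
theorem exists_T_left_uncountable {𝒰 : Set (Set G)} (hc : ContinuousGyroOps G)
    (hB : GyrBase 𝒰) {H : Set G} (hd : Dense H)
    {s : G} {B : Set G} (hBn : B ∈ nhds s)
    (hcc : NoCountCofinal s) (hAne : (H ∩ B ∩ Set.Iio s).Nonempty) :
    ∃ T : Set G, T ⊆ H ∩ B ∩ Set.Iio s ∧ s ∈ closure T ∧ closure T ⊆ T ∪ {s} ∧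
      ∀ t ∈ T, ∃ U : Set G, IsOpen U ∧ U ∩ T = {t} := by
  classical
  have hne : ∃ w : G, w < s := hAne.imp fun a ha => ha.2
  -- minimal cardinality of a cofinal family below s
  set Fam : Set Cardinal.{u} :=
    {c | ∃ D : Set G, (∀ d ∈ D, d < s) ∧ (∀ z, z < s → ∃ d ∈ D, z ≤ d) ∧ Cardinal.mk D = c}
    with hFam
  have hFamne : Fam.Nonempty :=
    ⟨Cardinal.mk (Set.Iio s), Set.Iio s, fun d hd' => hd', fun z hz => ⟨z, hz, le_refl z⟩, rfl⟩
  set μ := sInf Fam with hμdef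
  obtain ⟨D, hD1, hD2, hD3⟩ : μ ∈ Fam := csInf_mem hFamne
  have hμbound : ∀ Z : Set G, (∀ z ∈ Z, z < s) → Cardinal.mk Z < μ →
      ∃ b, b < s ∧ ∀ z ∈ Z, z < b := by
    intro Z hZs hZμ
    by_contra hcon
    push_neg at hcon
    have hZcof : ∀ z, z < s → ∃ d ∈ Z, z ≤ d := by
      intro z hz
      obtain ⟨d, hdZ, hdz⟩ := hcon z hz
      exact ⟨d, hdZ, hdz⟩
    have : μ ≤ Cardinal.mk Z := csInf_le' ⟨Z, hZs, hZcof, rfl⟩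
    exact absurd hZμ (not_lt.mpr this)
  have hμω : Cardinal.aleph0 < μ := by
    by_contra hle
    push_neg at hle
    have hDc : D.Countable := by
      have : Cardinal.mk D ≤ Cardinal.aleph0 := by rw [hD3]; exact hle
      exact Set.countable_coe_iff.mp (Cardinal.mk_le_aleph0_iff.mp this)
    obtain ⟨z, hzs, hzb⟩ := hcc D hDc hD1
    obtain ⟨d, hdD, hdz⟩ := hD2 z hzs
    exact absurd hdz (not_le.mpr (hzb d hdD))
  -- index type
  set ι := μ.ord.ToType with hι
  have hcardι : Cardinal.mk ι = μ := by
    rw [hι, Cardinal.mk_ord_toType]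
  have hsmall : ∀ i : ι, Cardinal.mk (Set.Iio i) < μ := fun i => Cardinal.mk_Iio_ord_toType i
  -- enumeration of D
  have hDcard : Cardinal.mk D = Cardinal.mk ι := by rw [hD3, hcardι]
  obtain ⟨eqv⟩ : Nonempty (ι ≃ D) := by
    rw [← Cardinal.eq]; exact hDcard.symm
  set e : ι → G := fun i => (eqv i : G) with he
  have heD : ∀ i, e i ∈ D := fun i => (eqv i).2
  have hes : ∀ i, e i < s := fun i => hD1 _ (heD i)
  have hesurj : ∀ d ∈ D, ∃ i, e i = d := fun d hd' => ⟨eqv.symm ⟨d, hd'⟩, by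
    simp [he]⟩
  -- choice of nice subgroups
  have hQex : ∀ a : G, a < s → ∃ P : Set G, IsNiceSub P ∧ IsOpen P ∧
      leftCoset s P ⊆ Set.Ioi a ∩ B := by
    intro a ha
    have hN : Set.Ioi a ∩ B ∈ nhds s :=
      Filter.inter_mem (isOpen_Ioi.mem_nhds ha) hBn
    exact exists_nice_coset_in_nbhd hc hB hcc hne hN
  set Qg : G → Set G := fun a => if h : a < s then (hQex a h).choose else Set.univ with hQg
  have hQnice : ∀ a, IsNiceSub (Qg a) := by
    intro a
    by_cases h : a < s
    · rw [hQg]; dsimp only; rw [dif_pos h]; exact (hQex a h).choose_spec.1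
    · rw [hQg]; dsimp only; rw [dif_neg h]; exact isNiceSub_univ
  have hQopen : ∀ a, IsOpen (Qg a) := by
    intro a
    by_cases h : a < s
    · rw [hQg]; dsimp only; rw [dif_pos h]; exact (hQex a h).choose_spec.2.1
    · rw [hQg]; dsimp only; rw [dif_neg h]; exact isOpen_univ
  have hQsub : ∀ a, a < s → leftCoset s (Qg a) ⊆ Set.Ioi a ∩ B := by
    intro a ha
    rw [hQg]; dsimp only; rw [dif_pos ha]
    exact (hQex a ha).choose_spec.2.2
  -- c-witnesses : Ioc (cg a) s ⊆ coset
  have hcex : ∀ a : G, ∃ ca : G, ca < s ∧ Set.Ioc ca s ⊆ leftCoset s (Qg a) := by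
    intro a
    have hnb : leftCoset s (Qg a) ∈ nhds s := by
      have : IsOpen (leftCoset s (Qg a)) := IsNiceSub.coset_isOpen hc (hQopen a) s
      exact this.mem_nhds ((hQnice a).mem_coset_self s)
    obtain ⟨ca, hca, hsub⟩ := exists_Ioc_subset_of_mem_nhds hnb hne
    exact ⟨ca, hca, hsub⟩
  set cg : G → G := fun a => (hcex a).choose with hcg
  have hcg1 : ∀ a, cg a < s := fun a => (hcex a).choose_spec.1
  have hcg2 : ∀ a, Set.Ioc (cg a) s ⊆ leftCoset s (Qg a) := fun a => (hcex a).choose_spec.2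
  -- the recursion
  have hstep : ∀ (i : ι) (rec : ∀ j : ι, j < i → G × G),
      ∃ p : G × G,
        (p.1 < s ∧ ∀ z, (z = e i ∨ ∃ j : ι, ∃ hj : j < i,
            (z = (rec j hj).1 ∨ z = (rec j hj).2)) → z < s → z < p.1) ∧
        (p.2 ∈ H ∧ p.1 < p.2 ∧ p.2 < s ∧
          ∀ z, (z = cg p.1 ∨ ∃ j : ι, ∃ hj : j < i, z = cg (rec j hj).1) →
            z < p.2) := by
    intro i rec
    -- bound the previous data
    have hb1 : ∃ b, b < s ∧ ∀ z ∈ {z : G | (z = e i ∨ ∃ j : ι, ∃ hj : j < i,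
        (z = (rec j hj).1 ∨ z = (rec j hj).2)) ∧ z < s}, z < b := by
      apply hμbound
      · exact fun z hz => hz.2
      · -- cardinality
        have : {z : G | (z = e i ∨ ∃ j : ι, ∃ hj : j < i,
            (z = (rec j hj).1 ∨ z = (rec j hj).2)) ∧ z < s} ⊆
            insert (e i) ((Set.range fun j : Set.Iio i => (rec j.1 j.2).1) ∪
              (Set.range fun j : Set.Iio i => (rec j.1 j.2).2)) := by
          rintro z ⟨hz | ⟨j, hj, hz | hz⟩, _⟩
          · exact Or.inl hz
          · exact Or.inr (Or.inl ⟨⟨j, hj⟩, hz.symm⟩)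
          · exact Or.inr (Or.inr ⟨⟨j, hj⟩, hz.symm⟩)
        refine lt_of_le_of_lt (Cardinal.mk_le_mk_of_subset this) ?_
        apply lt_of_le_of_lt (Cardinal.mk_insert_le)
        apply Cardinal.add_lt_of_lt (le_of_lt hμω) ?_ (lt_of_lt_of_le Cardinal.one_lt_aleph0 (le_of_lt hμω))
        apply lt_of_le_of_lt (Cardinal.mk_union_le _ _)
        apply Cardinal.add_lt_of_lt (le_of_lt hμω)
        · exact lt_of_le_of_lt Cardinal.mk_range_le (hsmall i)
        · exact lt_of_le_of_lt Cardinal.mk_range_le (hsmall i)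
    obtain ⟨b, hbs, hbz⟩ := hb1
    -- ℓ := b works for first component
    have hb2 : ∃ b2, b2 < s ∧ ∀ z ∈ {z : G | (z = cg b ∨ ∃ j : ι, ∃ hj : j < i,
        z = cg (rec j hj).1) ∧ z < s}, z < b2 := by
      apply hμbound
      · exact fun z hz => hz.2
      · have : {z : G | (z = cg b ∨ ∃ j : ι, ∃ hj : j < i, z = cg (rec j hj).1) ∧ z < s} ⊆
            insert (cg b) (Set.range fun j : Set.Iio i => cg (rec j.1 j.2).1) := by
          rintro z ⟨hz | ⟨j, hj, hz⟩, _⟩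
          · exact Or.inl hz
          · exact Or.inr ⟨⟨j, hj⟩, hz.symm⟩
        refine lt_of_le_of_lt (Cardinal.mk_le_mk_of_subset this) ?_
        apply lt_of_le_of_lt (Cardinal.mk_insert_le)
        apply Cardinal.add_lt_of_lt (le_of_lt hμω)
          (lt_of_le_of_lt Cardinal.mk_range_le (hsmall i))
          (lt_of_lt_of_le Cardinal.one_lt_aleph0 (le_of_lt hμω))
    obtain ⟨b2, hb2s, hb2z⟩ := hb2
    set m := max b b2 with hm
    have hms : m < s := max_lt hbs hb2s
    obtain ⟨w, hmw, hws⟩ := hcc.lt_trans_exists hms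
    obtain ⟨x, hxH, hxm⟩ := hd.exists_mem_open isOpen_Ioo ⟨w, hmw, hws⟩
    refine ⟨(b, x), ⟨hbs, ?_⟩, hxH, ?_, hxm.2, ?_⟩
    · intro z hz hzs
      exact hbz z ⟨hz, hzs⟩
    · exact lt_of_le_of_lt (le_max_left _ _) hxm.1
    · intro z hz
      have hzs : z < s := by
        rcases hz with hz | ⟨j, hj, hz⟩
        · rw [hz]; exact hcg1 b
        · rw [hz]; exact hcg1 _
      exact (hb2z z ⟨hz, hzs⟩).trans (lt_of_le_of_lt (le_max_right b b2) hxm.1)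
  choose stepF hstepP using hstep
  let F : ι → G × G := WellFoundedLT.fix stepF
  have hFeq : ∀ i, F i = stepF i fun j _ => F j := WellFoundedLT.fix_eq stepF
  have hspec : ∀ i : ι,
      ((F i).1 < s ∧ ∀ z, (z = e i ∨ ∃ j : ι, ∃ _ : j < i, (z = (F j).1 ∨ z = (F j).2)) →
        z < s → z < (F i).1) ∧
      ((F i).2 ∈ H ∧ (F i).1 < (F i).2 ∧ (F i).2 < s ∧
        ∀ z, (z = cg (F i).1 ∨ ∃ j : ι, ∃ _ : j < i, z = cg (F j).1) → z < (F i).2) := by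
    intro i
    have h := hstepP i (fun j _ => F j)
    simp only [← hFeq i] at h
    exact h
  set ℓ : ι → G := fun i => (F i).1 with hℓdef
  set x : ι → G := fun i => (F i).2 with hxdef
  have hℓs : ∀ i, ℓ i < s := fun i => (hspec i).1.1
  have hxH : ∀ i, x i ∈ H := fun i => (hspec i).2.1
  have hℓx : ∀ i, ℓ i < x i := fun i => (hspec i).2.2.1
  have hxs : ∀ i, x i < s := fun i => (hspec i).2.2.2.1
  have hxℓ : ∀ j i : ι, j < i → x j < ℓ i := fun j i hj =>
    (hspec i).1.2 (x j) (Or.inr ⟨j, hj, Or.inr rfl⟩) (hxs j)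
  have heℓ : ∀ i, e i < ℓ i := fun i => (hspec i).1.2 (e i) (Or.inl rfl) (hes i)
  have hcx : ∀ j i : ι, j ≤ i → cg (ℓ j) < x i := by
    intro j i hj
    rcases eq_or_lt_of_le hj with rfl | hlt
    · exact (hspec j).2.2.2.2 _ (Or.inl rfl)
    · exact (hspec i).2.2.2.2 _ (Or.inr ⟨j, hlt, rfl⟩)
  have hxcoset : ∀ j i : ι, j ≤ i → x i ∈ leftCoset s (Qg (ℓ j)) := by
    intro j i hj
    exact hcg2 (ℓ j) ⟨hcx j i hj, le_of_lt (hxs i)⟩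
  have hxmono : ∀ j i : ι, j < i → x j < x i := fun j i h => (hxℓ j i h).trans (hℓx i)
  have hxB : ∀ i, x i ∈ B := fun i => (hQsub (ℓ i) (hℓs i) (hxcoset i i le_rfl)).2
  have hcof : ∀ z, z < s → ∃ i : ι, z < x i := by
    intro z hz
    obtain ⟨d, hdD, hdz⟩ := hD2 z hz
    obtain ⟨i, rfl⟩ := hesurj d hdD
    exact ⟨i, lt_of_le_of_lt hdz ((heℓ i).trans (hℓx i))⟩
  have hclT : s ∈ closure (Set.range x) := by
    rw [mem_closure_iff_nhds]
    intro N hN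
    obtain ⟨c0, hc0, hsub⟩ := exists_Ioc_subset_of_mem_nhds hN hne
    obtain ⟨i, hi⟩ := hcof c0 hc0
    exact ⟨x i, hsub ⟨hi, le_of_lt (hxs i)⟩, ⟨i, rfl⟩⟩
  have hwf : WellFounded ((· < ·) : ι → ι → Prop) := IsWellFounded.wf
  have hnomax : ∀ i : ι, ∃ j, i < j := by
    intro i
    by_contra hmax
    push_neg at hmax
    have hsub2 : (Set.univ : Set ι) ⊆ insert i (Set.Iio i) := by
      intro j _
      rcases lt_or_eq_of_le (hmax j) with h | h
      · exact Or.inr h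
      · exact Or.inl h
    have hμle : μ ≤ Cardinal.mk (insert i (Set.Iio i) : Set ι) := by
      have h1 : Cardinal.mk (Set.univ : Set ι) ≤ Cardinal.mk (insert i (Set.Iio i) : Set ι) :=
        Cardinal.mk_le_mk_of_subset hsub2
      rw [Cardinal.mk_univ, hcardι] at h1
      exact h1
    have hlt : Cardinal.mk (insert i (Set.Iio i) : Set ι) < μ :=
      lt_of_le_of_lt (Cardinal.mk_insert_le)
        (Cardinal.add_lt_of_lt (le_of_lt hμω) (hsmall i)
          (lt_of_lt_of_le Cardinal.one_lt_aleph0 (le_of_lt hμω)))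
    exact absurd hμle (not_le.mpr hlt)
  -- main separation claim
  have hsep : ∀ y : G, y ≠ s → ∃ O : Set G, IsOpen O ∧ y ∈ O ∧ ∀ i, x i ∈ O → x i = y := by
    intro y hy
    rcases lt_trichotomy y s with hys | heq | hys
    · -- y < s
      have hBIne : {i : ι | y < x i}.Nonempty := hcof y hys
      set i₀ := hwf.min _ hBIne with hi₀def
      have hi₀ : y < x i₀ := hwf.min_mem _ hBIne
      have hlow : ∀ j : ι, j < i₀ → x j ≤ y := by
        intro j hj
        by_contra hcon
        exact (hwf.not_lt_min {i : ι | y < x i} (show j ∈ {i : ι | y < x i} from not_le.mp hcon)) hj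
      obtain ⟨j', hj'⟩ := hnomax i₀
      have hne2 : {j : ι | i₀ < j}.Nonempty := ⟨j', hj'⟩
      set i₁ := hwf.min _ hne2 with hi₁def
      have hi₁ : i₀ < i₁ := hwf.min_mem _ hne2
      have hi₁min : ∀ j : ι, i₀ < j → i₁ ≤ j := by
        intro j hj
        exact not_lt.mp (hwf.not_lt_min _ hj)
      have hyℓi₁ : y < ℓ i₁ := lt_trans hi₀ (hxℓ i₀ i₁ hi₁)
      -- the low-kill induction
      have hLK : ∀ lam : ι, y ∉ closure {z | ∃ i : ι, i < lam ∧ x i = z ∧ z < y} := by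
        intro lam
        induction lam using WellFoundedLT.induction with
        | _ lam IH =>
          intro hyc
          by_cases hsucc : ∃ imax, imax < lam ∧ ∀ j, j < lam → j ≤ imax
          · obtain ⟨im, him, himax⟩ := hsucc
            have hsub3 : {z | ∃ i, i < lam ∧ x i = z ∧ z < y} ⊆
                {z | ∃ i, i < im ∧ x i = z ∧ z < y} ∪ ({x im} ∩ Set.Iio y) := by
              rintro z ⟨i, hi, rfl, hzy⟩
              rcases lt_or_eq_of_le (himax i hi) with h | h
              · exact Or.inl ⟨i, h, rfl, hzy⟩
              · subst h; exact Or.inr ⟨rfl, hzy⟩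
            have hyc2 := closure_mono hsub3 hyc
            rw [closure_union] at hyc2
            rcases hyc2 with h | h
            · exact IH im him h
            · have h2 : y ∈ ({x im} : Set G) := by
                have hmono := closure_mono (Set.inter_subset_left
                  (s := {x im}) (t := Set.Iio y)) h
                rwa [closure_singleton] at hmono
              have h3 : ({x im} ∩ Set.Iio y : Set G).Nonempty := by
                by_contra hne3
                rw [Set.not_nonempty_iff_eq_empty.mp hne3, closure_empty] at h
                exact h
              obtain ⟨z, hz1, hz2⟩ := h3
              rw [Set.mem_singleton_iff] at hz1 h2
              rw [hz1, ← h2] at hz2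
              exact absurd hz2 (lt_irrefl _)
          · push_neg at hsucc
            have hymem : ∀ j, j < lam → y ∈ leftCoset s (Qg (ℓ j)) := by
              intro j hj
              have hdecomp : {z | ∃ i, i < lam ∧ x i = z ∧ z < y} ⊆
                  {z | ∃ i, i < j ∧ x i = z ∧ z < y} ∪ leftCoset s (Qg (ℓ j)) := by
                rintro z ⟨i, hi, rfl, hzy⟩
                rcases lt_or_ge i j with h | h
                · exact Or.inl ⟨i, h, rfl, hzy⟩
                · exact Or.inr (hxcoset j i h)
              have hyc2 := closure_mono hdecomp hyc
              rw [closure_union] at hyc2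
              rcases hyc2 with h | h
              · exact absurd h (IH j hj)
              · rwa [IsClosed.closure_eq
                  (IsNiceSub.coset_isClosed (hQnice _) hc (hQopen _) s)] at h
            set Pinf := ⋂ j : {j : ι // j < lam}, Qg (ℓ j.1) with hPinf
            have hPnice : IsNiceSub Pinf :=
              isNiceSub_iInter (fun j : {j : ι // j < lam} => hQnice (ℓ j.1))
            have hCeq : leftCoset s Pinf = ⋂ j : {j : ι // j < lam}, leftCoset s (Qg (ℓ j.1)) :=
              leftCoset_iInter s
            have hyC : y ∈ leftCoset s Pinf := by
              rw [hCeq]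
              exact Set.mem_iInter.mpr fun j => hymem j.1 j.2
            have hPopen : IsOpen Pinf := by
              have hcard2 : Cardinal.mk
                  (Set.range fun j : {j : ι // j < lam} => cg (ℓ j.1)) < μ := by
                refine lt_of_le_of_lt Cardinal.mk_range_le ?_
                have : Cardinal.mk {j : ι // j < lam} = Cardinal.mk (Set.Iio lam) := rfl
                rw [this]
                exact hsmall lam
              obtain ⟨b3, hb3s, hb3⟩ := hμbound _
                (by rintro z ⟨j, rfl⟩; exact hcg1 _) hcard2
              obtain ⟨w3, hw3, hw3s⟩ := hcc.lt_trans_exists hb3s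
              apply hPnice.isOpen_of_interior hc
              have hIooSub : Set.Ioo b3 s ⊆ leftCoset s Pinf := by
                intro u hu
                rw [hCeq, Set.mem_iInter]
                intro j
                exact hcg2 _ ⟨lt_trans (hb3 _ ⟨j, rfl⟩) hu.1, le_of_lt hu.2⟩
              have hop : IsOpen ((fun v => op (inv s) v) '' Set.Ioo b3 s) :=
                isOpen_lmul_image hc isOpen_Ioo
              have hsubP : (fun v => op (inv s) v) '' Set.Ioo b3 s ⊆ Pinf := by
                rintro _ ⟨u, hu, rfl⟩
                have := hIooSub hu
                rwa [mem_leftCoset_iff_op_inv] at this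
              exact ⟨op (inv s) w3, interior_maximal hsubP hop ⟨w3, ⟨hw3, hw3s⟩, rfl⟩⟩
            have hCopen : IsOpen (leftCoset s Pinf) := IsNiceSub.coset_isOpen hc hPopen s
            rw [mem_closure_iff] at hyc
            obtain ⟨z, hz1, hz2⟩ := hyc _ hCopen hyC
            obtain ⟨i, hilam, rfl, hzy⟩ := hz2
            obtain ⟨j, hjlam, hij⟩ := hsucc i hilam
            have hxiNotIn : x i ∉ leftCoset s (Qg (ℓ j)) := by
              intro hmem
              have hIoi := (hQsub (ℓ j) (hℓs j) hmem).1
              exact absurd hIoi (not_lt.mpr (le_of_lt (hxℓ i j hij)))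
            apply hxiNotIn
            rw [hCeq] at hz1
            exact Set.mem_iInter.mp hz1 ⟨j, hjlam⟩
      -- extract an open set from hLK i₀
      have hLK0 := hLK i₀
      rw [mem_closure_iff] at hLK0
      push_neg at hLK0
      obtain ⟨O₂, hO₂o, hyO₂, hO₂dis⟩ := hLK0
      refine ⟨(leftCoset s (Qg (ℓ i₁)))ᶜ ∩ Set.Iio (x i₀) ∩ O₂, ?_, ?_, ?_⟩
      · exact ((IsNiceSub.coset_isClosed (hQnice _) hc (hQopen _) s).isOpen_compl.inter
          isOpen_Iio).inter hO₂o
      · refine ⟨⟨?_, hi₀⟩, hyO₂⟩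
        intro hmem
        have hIoi := (hQsub _ (hℓs i₁) hmem).1
        exact absurd hIoi (not_lt.mpr (le_of_lt hyℓi₁))
      · intro i hxiO
        obtain ⟨⟨hnotc, hlt2⟩, hO₂i⟩ := hxiO
        rcases lt_trichotomy i i₀ with h | rfl | h
        · rcases lt_or_eq_of_le (hlow i h) with h2 | h2
          · exfalso
            have hmem2 : x i ∈ O₂ ∩ {z | ∃ i', i' < i₀ ∧ x i' = z ∧ z < y} :=
              ⟨hO₂i, ⟨i, h, rfl, h2⟩⟩
            exact Set.eq_empty_iff_forall_notMem.mp hO₂dis (x i) hmem2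
          · exact h2
        · exact absurd hlt2 (lt_irrefl _)
        · exact absurd (hxcoset i₁ i (hi₁min i h)) hnotc
    · exact absurd heq hy
    · refine ⟨Set.Ioi s, isOpen_Ioi, hys, ?_⟩
      intro i hi
      exact absurd hi (not_lt.mpr (le_of_lt (hxs i)))
  -- final assembly
  refine ⟨Set.range x, ?_, hclT, ?_, ?_⟩
  · rintro _ ⟨i, rfl⟩
    exact ⟨⟨hxH i, hxB i⟩, hxs i⟩
  · intro y hy
    by_cases hyT : y ∈ Set.range x ∪ {s}
    · exact hyT
    · exfalso
      have hyne : y ≠ s := fun h => hyT (Or.inr h)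
      have hynr : y ∉ Set.range x := fun h => hyT (Or.inl h)
      obtain ⟨O, hOo, hyO, hOx⟩ := hsep y hyne
      rw [mem_closure_iff] at hy
      obtain ⟨z, hzO, i, rfl⟩ := hy O hOo hyO
      exact hynr ⟨i, hOx i hzO⟩
  · rintro t ⟨i, rfl⟩
    obtain ⟨O, hOo, hyO, hOx⟩ := hsep (x i) (ne_of_lt (hxs i))
    refine ⟨O, hOo, ?_⟩
    ext z
    constructor
    · rintro ⟨hzO, j, rfl⟩
      exact hOx j hzO
    · rintro rfl
      exact ⟨hyO, ⟨i, rfl⟩⟩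

end Gyrogroup
namespace Gyrogroup

variable {G : Type u} [Gyrogroup G] [TopologicalSpace G] [LinearOrder G] [OrderTopology G]

theorem exists_T_left_countable {H : Set G} {s : G} {B : Set G}
    (hclA : s ∈ closure (H ∩ B ∩ Set.Iio s))
    {D : Set G} (hDc : D.Countable) (hD1 : ∀ d ∈ D, d < s) (hD2 : ∀ z, z < s → ∃ d ∈ D, z ≤ d) :
    ∃ T : Set G, T ⊆ H ∩ B ∩ Set.Iio s ∧ s ∈ closure T ∧ closure T ⊆ T ∪ {s} ∧
      ∀ t ∈ T, ∃ U : Set G, IsOpen U ∧ U ∩ T = {t} := by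
  classical
  set A := H ∩ B ∩ Set.Iio s with hA
  have hAne : A.Nonempty := by
    by_contra hcon
    rw [Set.not_nonempty_iff_eq_empty.mp hcon, closure_empty] at hclA
    exact hclA
  have hne : ∃ w : G, w < s := hAne.imp fun a ha => ha.2
  have hst : ∀ m : G, m < s → ∃ z, z ∈ A ∧ m < z := by
    intro m hm
    rw [mem_closure_iff] at hclA
    obtain ⟨z, hz1, hz2⟩ := hclA (Set.Ioi m) isOpen_Ioi hm
    exact ⟨z, hz2, hz1⟩
  have hDne : D.Nonempty := by
    obtain ⟨a, ha⟩ := hAne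
    obtain ⟨d, hd, _⟩ := hD2 a ha.2
    exact ⟨d, hd⟩
  obtain ⟨f, hfD⟩ := Set.Countable.exists_eq_range hDc hDne
  have hfs : ∀ n, f n < s := fun n => hD1 _ (by rw [hfD]; exact ⟨n, rfl⟩)
  let pick : ∀ m : G, m < s → {z : G // z ∈ A ∧ m < z} := fun m hm =>
    Classical.indefiniteDescription _ (hst m hm)
  let g : ℕ → {z : G // z ∈ A} := fun n => Nat.rec ⟨hAne.choose, hAne.choose_spec⟩
    (fun n prev =>
      ⟨(pick (max prev.1 (f n)) (max_lt prev.2.2 (hfs n))).1,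
        (pick (max prev.1 (f n)) (max_lt prev.2.2 (hfs n))).2.1⟩) n
  set gm : ℕ → G := fun n => (g n).1 with hgm
  have hgA : ∀ n, gm n ∈ A := fun n => (g n).2
  have hgs : ∀ n, gm n < s := fun n => (hgA n).2
  have hgsucc : ∀ n, max (gm n) (f n) < gm (n + 1) := by
    intro n
    exact (pick (max (g n).1 (f n)) (max_lt (g n).2.2 (hfs n))).2.2
  have hmono : StrictMono gm :=
    strictMono_nat_of_lt_succ fun n => lt_of_le_of_lt (le_max_left _ _) (hgsucc n)
  have hfg : ∀ n, f n < gm (n + 1) := fun n => lt_of_le_of_lt (le_max_right _ _) (hgsucc n)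
  have hcof : ∀ z, z < s → ∃ n, z < gm n := by
    intro z hz
    obtain ⟨d, hdD, hdz⟩ := hD2 z hz
    rw [hfD] at hdD
    obtain ⟨n, rfl⟩ := hdD
    exact ⟨n + 1, lt_of_le_of_lt hdz (hfg n)⟩
  have hclT : s ∈ closure (Set.range gm) := by
    rw [mem_closure_iff_nhds]
    intro N hN
    obtain ⟨c0, hc0, hsub⟩ := exists_Ioc_subset_of_mem_nhds hN hne
    obtain ⟨n, hn⟩ := hcof c0 hc0
    exact ⟨gm n, hsub ⟨hn, le_of_lt (hgs n)⟩, ⟨n, rfl⟩⟩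
  have hsep : ∀ y : G, y ≠ s → ∃ O : Set G, IsOpen O ∧ y ∈ O ∧ ∀ n, gm n ∈ O → gm n = y := by
    intro y hy
    rcases lt_trichotomy y s with hys | heq | hys
    · have hex : ∃ n, y < gm n := hcof y hys
      have hn₀spec : y < gm (Nat.find hex) := Nat.find_spec hex
      cases hn₀case : Nat.find hex with
      | zero =>
        rw [hn₀case] at hn₀spec
        refine ⟨Set.Iio (gm 0), isOpen_Iio, hn₀spec, ?_⟩
        intro m hm
        exact absurd (hmono.lt_iff_lt.mp (Set.mem_Iio.mp hm)) (Nat.not_lt_zero m)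
      | succ k =>
        rw [hn₀case] at hn₀spec
        have hky : ¬ y < gm k := Nat.find_min hex (by rw [hn₀case]; exact Nat.lt_succ_self k)
        rcases lt_or_eq_of_le (not_lt.mp hky) with hlt | hEq
        · refine ⟨Set.Ioo (gm k) (gm (k + 1)), isOpen_Ioo, ⟨hlt, hn₀spec⟩, ?_⟩
          intro m hm
          have h1 : k < m := hmono.lt_iff_lt.mp hm.1
          have h2 : m < k + 1 := hmono.lt_iff_lt.mp hm.2
          omega
        · cases k with
          | zero =>
            refine ⟨Set.Iio (gm 1), isOpen_Iio, ?_, ?_⟩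
            · rw [← hEq]; exact hmono (Nat.lt_succ_self 0)
            · intro m hm
              have h1 : m < 1 := hmono.lt_iff_lt.mp (Set.mem_Iio.mp hm)
              have : m = 0 := by omega
              rw [this, hEq]
          | succ j =>
            refine ⟨Set.Ioo (gm j) (gm (j + 2)), isOpen_Ioo, ?_, ?_⟩
            · rw [← hEq]
              exact ⟨hmono (Nat.lt_succ_self j), hmono (show j + 1 < j + 2 by omega)⟩
            · intro m hm
              have h1 : j < m := hmono.lt_iff_lt.mp hm.1
              have h2 : m < j + 2 := hmono.lt_iff_lt.mp hm.2
              have : m = j + 1 := by omega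
              rw [this, hEq]
    · exact absurd heq hy
    · refine ⟨Set.Ioi s, isOpen_Ioi, hys, ?_⟩
      intro n hn
      exact absurd hn (not_lt.mpr (le_of_lt (hgs n)))
  refine ⟨Set.range gm, ?_, hclT, ?_, ?_⟩
  · rintro _ ⟨n, rfl⟩
    exact hgA n
  · intro y hy2
    by_cases hyT : y ∈ Set.range gm ∪ {s}
    · exact hyT
    · exfalso
      have hyne : y ≠ s := fun h => hyT (Or.inr h)
      have hynr : y ∉ Set.range gm := fun h => hyT (Or.inl h)
      obtain ⟨O, hOo, hyO, hOx⟩ := hsep y hyne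
      rw [mem_closure_iff] at hy2
      obtain ⟨z, hzO, n, rfl⟩ := hy2 O hOo hyO
      exact hynr ⟨n, hOx n hzO⟩
  · rintro t ⟨n, rfl⟩
    obtain ⟨O, hOo, hyO, hOx⟩ := hsep (gm n) (ne_of_lt (hgs n))
    refine ⟨O, hOo, ?_⟩
    ext z
    constructor
    · rintro ⟨hzO, m, rfl⟩
      exact hOx m hzO
    · rintro rfl
      exact ⟨hyO, ⟨n, rfl⟩⟩

end Gyrogroup
namespace Gyrogroup

variable {G : Type u} [Gyrogroup G] [TopologicalSpace G] [LinearOrder G] [OrderTopology G]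

theorem exists_T_left {𝒰 : Set (Set G)} (hc : ContinuousGyroOps G)
    (hB : GyrBase 𝒰) {H : Set G} (hd : Dense H)
    {s : G} {B : Set G} (hBn : B ∈ nhds s)
    (hcl : s ∈ closure (H ∩ Set.Iio s)) :
    ∃ T : Set G, T ⊆ H ∩ B ∩ Set.Iio s ∧ s ∈ closure T ∧ closure T ⊆ T ∪ {s} ∧
      ∀ t ∈ T, ∃ U : Set G, IsOpen U ∧ U ∩ T = {t} := by
  have hclA : s ∈ closure (H ∩ B ∩ Set.Iio s) := by
    rw [mem_closure_iff_nhds] at hcl ⊢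
    intro N hN
    obtain ⟨z, hz1, hz2⟩ := hcl (N ∩ B) (Filter.inter_mem hN hBn)
    exact ⟨z, hz1.1, ⟨hz2.1, hz1.2⟩, hz2.2⟩
  by_cases hcc : NoCountCofinal s
  · have hAne : (H ∩ B ∩ Set.Iio s).Nonempty := by
      by_contra hcon
      rw [Set.not_nonempty_iff_eq_empty.mp hcon, closure_empty] at hclA
      exact hclA
    exact exists_T_left_uncountable hc hB hd hBn hcc hAne
  · rw [NoCountCofinal] at hcc
    push_neg at hcc
    obtain ⟨D, hDc, hD1, hD2⟩ := hcc
    refine exists_T_left_countable hclA hDc hD1 ?_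
    intro z hz
    obtain ⟨d, hd', hd2⟩ := hD2 z hz
    exact ⟨d, hd', hd2⟩

theorem exists_T_right {𝒰 : Set (Set G)} (hc : ContinuousGyroOps G)
    (hB : GyrBase 𝒰) {H : Set G} (hd : Dense H)
    {s : G} {B : Set G} (hBn : B ∈ nhds s)
    (hcl : s ∈ closure (H ∩ Set.Ioi s)) :
    ∃ T : Set G, T ⊆ H ∩ B ∩ Set.Ioi s ∧ s ∈ closure T ∧ closure T ⊆ T ∪ {s} ∧
      ∀ t ∈ T, ∃ U : Set G, IsOpen U ∧ U ∩ T = {t} := by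
  letI : Gyrogroup Gᵒᵈ := ‹Gyrogroup G›
  exact exists_T_left (G := Gᵒᵈ) hc hB hd hBn hcl

/-- The key per-point lemma: a discrete set inside `H ∩ I` clustering exactly at `s`. -/
theorem key_point {𝒰 : Set (Set G)} (hc : ContinuousGyroOps G)
    (hB : GyrBase 𝒰) {H : Set G} (hd : Dense H) {s : G} (hsH : s ∉ H)
    {I : Set G} (hI : IsOpen I) (hsI : s ∈ I) :
    ∃ T : Set G, T ⊆ H ∩ I ∧ s ∉ T ∧ s ∈ closure T ∧ closure T ⊆ T ∪ {s} ∧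
      ∀ t ∈ T, ∃ U : Set G, IsOpen U ∧ U ∩ T = {t} := by
  have hsplit : H = (H ∩ Set.Iio s) ∪ (H ∩ Set.Ioi s) := by
    ext z
    constructor
    · intro hz
      rcases lt_trichotomy z s with h | rfl | h
      · exact Or.inl ⟨hz, h⟩
      · exact absurd hz hsH
      · exact Or.inr ⟨hz, h⟩
    · rintro (hz | hz) <;> exact hz.1
  have hscl : s ∈ closure ((H ∩ Set.Iio s) ∪ (H ∩ Set.Ioi s)) := by
    rw [← hsplit]; exact hd s
  rw [closure_union] at hscl
  have hBn : I ∈ nhds s := hI.mem_nhds hsI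
  rcases hscl with h | h
  · obtain ⟨T, hT1, hT2, hT3, hT4⟩ := exists_T_left hc hB hd hBn h
    exact ⟨T, fun t ht => ⟨(hT1 ht).1.1, (hT1 ht).1.2⟩,
      fun hs => absurd (hT1 hs).2 (lt_irrefl s), hT2, hT3, hT4⟩
  · obtain ⟨T, hT1, hT2, hT3, hT4⟩ := exists_T_right hc hB hd hBn h
    exact ⟨T, fun t ht => ⟨(hT1 ht).1.1, (hT1 ht).1.2⟩,
      fun hs => absurd (hT1 hs).2 (lt_irrefl s), hT2, hT3, hT4⟩

end Gyrogroup
namespace Gyrogroup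

variable {G : Type u} [Gyrogroup G] [TopologicalSpace G] [LinearOrder G] [OrderTopology G]

theorem generatedSubgyrogroup_mono {S S' : Set G} (h : S ⊆ S') :
    generatedSubgyrogroup S ⊆ generatedSubgyrogroup S' := by
  intro z hz K hK
  exact hz K ⟨hK.1, h.trans hK.2⟩

theorem master {𝒰 : Set (Set G)} (hc : ContinuousGyroOps G) (hB : GyrBase 𝒰)
    {H : Set G} (hH1 : (one : G) ∈ H) (hd : Dense H)
    {S : Set G} (hS : IsSuitableSetIn Set.univ S) :
    ∃ S' : Set G, S' ⊆ H ∧ S ∩ H ⊆ S' ∧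
      (∀ t ∈ S', ∃ U : Set G, IsOpen U ∧ U ∩ (S' ∪ {one}) = {t}) ∧
      (closure S' ⊆ S' ∪ (S ∪ {one})) ∧
      (H ⊆ closure (generatedSubgyrogroup S')) ∧
      (∀ x ∈ H, ∀ J : Set G, IsOpen J → J.OrdConnected → x ∈ J →
        J ∩ (S ∪ {one}) ⊆ {x} → ∃ U : Set G, IsOpen U ∧ U ⊆ J ∧ U ∩ (S' ∪ {x}) = {x}) := by
  classical
  obtain ⟨-, hSd, hScl', hSg⟩ := hS
  have hScl : closure (S ∪ {one}) ⊆ S ∪ {one} := fun z hz => hScl' ⟨hz, trivial⟩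
  have hDcl : IsClosed (S ∪ {one} : Set G) := isClosed_of_closure_subset hScl
  -- per point data for s ∈ S \ H
  have hkey : ∀ σ : ↥(S \ H), ∃ J T : Set G, IsOpen J ∧ J.OrdConnected ∧ σ.1 ∈ J ∧
      (J ∩ (S ∪ {one}) ⊆ {σ.1}) ∧ T ⊆ H ∩ J ∧ σ.1 ∉ T ∧ σ.1 ∈ closure T ∧
      closure T ⊆ T ∪ {σ.1} ∧ ∀ t ∈ T, ∃ U : Set G, IsOpen U ∧ U ∩ T = {t} := by
    rintro ⟨s, hsS, hsH⟩
    have hs1 : s ≠ one := fun h => hsH (h ▸ hH1)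
    obtain ⟨U, hUo, hUS⟩ := hSd s hsS
    have hsU : s ∈ U := by
      have : s ∈ U ∩ S := by rw [hUS]; rfl
      exact this.1
    have hO : U ∩ {one}ᶜ ∈ nhds s :=
      (hUo.inter isOpen_compl_singleton).mem_nhds ⟨hsU, hs1⟩
    obtain ⟨J, hJo, hsJ, hJc, hJsub⟩ := exists_ordConnected_nbhd hO
    obtain ⟨T, hT1, hT2, hT3, hT4, hT5⟩ := key_point hc hB hd hsH hJo hsJ
    refine ⟨J, T, hJo, hJc, hsJ, ?_, hT1, hT2, hT3, hT4, hT5⟩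
    rintro z ⟨hzJ, hzD⟩
    rcases hzD with hzS | hz1
    · have : z ∈ U ∩ S := ⟨(hJsub hzJ).1, hzS⟩
      rw [hUS] at this
      exact this
    · exact absurd hz1 (hJsub hzJ).2
  choose Jf Tf hJo hJc hJm hJD hTsub hTs hTclmem hTcl hTiso using hkey
  set S' : Set G := (S ∩ H) ∪ ⋃ σ : ↥(S \ H), Tf σ with hS'def
  -- membership helpers
  have hT_H : ∀ (σ : ↥(S \ H)) {z}, z ∈ Tf σ → z ∈ H := by
    intro σ z hz; exact (hTsub σ hz).1
  have hT_J : ∀ (σ : ↥(S \ H)) {z}, z ∈ Tf σ → z ∈ Jf σ := by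
    intro σ z hz; exact (hTsub σ hz).2
  have hT_ne : ∀ (σ : ↥(S \ H)) {z}, z ∈ Tf σ → z ≠ σ.1 := by
    intro σ z hz heq
    exact σ.2.2 (heq ▸ hT_H σ hz)
  have hS'H : S' ⊆ H := by
    rintro z (hz | hz)
    · exact hz.2
    · obtain ⟨σ, hzT⟩ := Set.mem_iUnion.mp hz
      exact hT_H σ hzT
  -- source uniqueness lemmas
  have hcoreR : ∀ (K : Set G), K.OrdConnected → ∀ σ τ : ↥(S \ H), σ.1 < τ.1 →
      σ.1 ∉ K → τ.1 ∉ K → (∃ z ∈ Tf σ ∩ K, σ.1 < z) → (∃ z ∈ Tf τ ∩ K, τ.1 < z) → False := by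
    rintro K hKc σ τ hlt hσK hτK ⟨z₁, ⟨hz₁T, hz₁K⟩, hz₁gt⟩ ⟨z₂, ⟨hz₂T, hz₂K⟩, hz₂gt⟩
    have hτz₁ : τ.1 < z₁ := by
      by_contra hcon
      exact hτK (hKc.out hz₁K hz₂K ⟨not_lt.mp hcon, le_of_lt hz₂gt⟩)
    have hτJ : τ.1 ∈ Jf σ :=
      (hJc σ).out (hJm σ) (hT_J σ hz₁T) ⟨le_of_lt hlt, le_of_lt hτz₁⟩
    have : τ.1 ∈ ({σ.1} : Set G) := hJD σ ⟨hτJ, Or.inl τ.2.1⟩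
    rw [Set.mem_singleton_iff] at this
    exact absurd this (ne_of_gt hlt)
  have hcoreL : ∀ (K : Set G), K.OrdConnected → ∀ σ τ : ↥(S \ H), σ.1 < τ.1 →
      σ.1 ∉ K → τ.1 ∉ K → (∃ z ∈ Tf σ ∩ K, z < σ.1) → (∃ z ∈ Tf τ ∩ K, z < τ.1) → False := by
    rintro K hKc σ τ hlt hσK hτK ⟨z₁, ⟨hz₁T, hz₁K⟩, hz₁lt⟩ ⟨z₂, ⟨hz₂T, hz₂K⟩, hz₂lt⟩
    have hz₂σ : z₂ < σ.1 := by
      by_contra hcon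
      exact hσK (hKc.out hz₁K hz₂K ⟨le_of_lt hz₁lt, not_lt.mp hcon⟩)
    have hσJ : σ.1 ∈ Jf τ :=
      (hJc τ).out (hT_J τ hz₂T) (hJm τ) ⟨le_of_lt hz₂σ, le_of_lt hlt⟩
    have : σ.1 ∈ ({τ.1} : Set G) := hJD τ ⟨hσJ, Or.inl σ.2.1⟩
    rw [Set.mem_singleton_iff] at this
    exact absurd this (ne_of_lt hlt)
  have hsrcR : ∀ (K : Set G), K.OrdConnected → ∀ σ τ : ↥(S \ H), σ.1 ∉ K → τ.1 ∉ K →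
      (∃ z ∈ Tf σ ∩ K, σ.1 < z) → (∃ z ∈ Tf τ ∩ K, τ.1 < z) → σ = τ := by
    intro K hKc σ τ hσK hτK h1 h2
    rcases lt_trichotomy σ.1 τ.1 with h | h | h
    · exact absurd (hcoreR K hKc σ τ h hσK hτK h1 h2) not_false
    · exact Subtype.ext h
    · exact absurd (hcoreR K hKc τ σ h hτK hσK h2 h1) not_false
  have hsrcL : ∀ (K : Set G), K.OrdConnected → ∀ σ τ : ↥(S \ H), σ.1 ∉ K → τ.1 ∉ K →
      (∃ z ∈ Tf σ ∩ K, z < σ.1) → (∃ z ∈ Tf τ ∩ K, z < τ.1) → σ = τ := by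
    intro K hKc σ τ hσK hτK h1 h2
    rcases lt_trichotomy σ.1 τ.1 with h | h | h
    · exact absurd (hcoreL K hKc σ τ h hσK hτK h1 h2) not_false
    · exact Subtype.ext h
    · exact absurd (hcoreL K hKc τ σ h hτK hσK h2 h1) not_false
  -- per-source isolator for any point x ≠ σ.1
  have hTiso2 : ∀ (τ : ↥(S \ H)) (x : G), x ≠ τ.1 →
      ∃ V : Set G, IsOpen V ∧ x ∈ V ∧ V ∩ Tf τ ⊆ {x} := by
    intro τ x hx
    by_cases hxT : x ∈ Tf τ
    · obtain ⟨U, hU, hUT⟩ := hTiso τ x hxT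
      have hxU : x ∈ U := by
        have : x ∈ U ∩ Tf τ := by rw [hUT]; rfl
        exact this.1
      exact ⟨U, hU, hxU, by rw [hUT]⟩
    · refine ⟨(closure (Tf τ))ᶜ, isClosed_closure.isOpen_compl, ?_, ?_⟩
      · intro hmem
        rcases hTcl τ hmem with h | h
        · exact hxT h
        · exact hx h
      · rintro z ⟨hz1, hz2⟩
        exact absurd (subset_closure hz2) hz1
  -- the central covering lemma
  have hcover : ∀ (K : Set G), K.OrdConnected → ∀ x : G, x ∈ K →
      (∀ σ : ↥(S \ H), x ≠ σ.1) →
      ∃ V : Set G, IsOpen V ∧ x ∈ V ∧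
        ∀ σ : ↥(S \ H), σ.1 ∉ K → V ∩ K ∩ Tf σ ⊆ {x} := by
    intro K hKc x hxK hxs
    by_cases hR : ∃ σ : ↥(S \ H), σ.1 ∉ K ∧ ∃ z ∈ Tf σ ∩ K, σ.1 < z
    case neg =>
      by_cases hL : ∃ σ : ↥(S \ H), σ.1 ∉ K ∧ ∃ z ∈ Tf σ ∩ K, z < σ.1
      case neg =>
        refine ⟨Set.univ, isOpen_univ, trivial, ?_⟩
        rintro σ hσK z ⟨⟨-, hzK⟩, hzT⟩
        rcases lt_trichotomy σ.1 z with h | h | h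
        · exact absurd ⟨σ, hσK, z, ⟨hzT, hzK⟩, h⟩ hR
        · exact absurd h.symm (hT_ne σ hzT)
        · exact absurd ⟨σ, hσK, z, ⟨hzT, hzK⟩, h⟩ hL
      case pos =>
        obtain ⟨σL, hσLK, hzL⟩ := hL
        obtain ⟨VL, hVLo, hxVL, hVL⟩ := hTiso2 σL x (hxs σL)
        refine ⟨VL, hVLo, hxVL, ?_⟩
        rintro σ hσK z ⟨⟨hzV, hzK⟩, hzT⟩
        rcases lt_trichotomy σ.1 z with h | h | h
        · exact absurd ⟨σ, hσK, z, ⟨hzT, hzK⟩, h⟩ hR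
        · exact absurd h.symm (hT_ne σ hzT)
        · have : σ = σL := hsrcL K hKc σ σL hσK hσLK ⟨z, ⟨hzT, hzK⟩, h⟩ hzL
          exact hVL ⟨hzV, this ▸ hzT⟩
    case pos =>
      obtain ⟨σR, hσRK, hzR⟩ := hR
      obtain ⟨VR, hVRo, hxVR, hVR⟩ := hTiso2 σR x (hxs σR)
      by_cases hL : ∃ σ : ↥(S \ H), σ.1 ∉ K ∧ ∃ z ∈ Tf σ ∩ K, z < σ.1
      case neg =>
        refine ⟨VR, hVRo, hxVR, ?_⟩
        rintro σ hσK z ⟨⟨hzV, hzK⟩, hzT⟩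
        rcases lt_trichotomy σ.1 z with h | h | h
        · have : σ = σR := hsrcR K hKc σ σR hσK hσRK ⟨z, ⟨hzT, hzK⟩, h⟩ hzR
          exact hVR ⟨hzV, this ▸ hzT⟩
        · exact absurd h.symm (hT_ne σ hzT)
        · exact absurd ⟨σ, hσK, z, ⟨hzT, hzK⟩, h⟩ hL
      case pos =>
        obtain ⟨σL, hσLK, hzL⟩ := hL
        obtain ⟨VL, hVLo, hxVL, hVL⟩ := hTiso2 σL x (hxs σL)
        refine ⟨VR ∩ VL, hVRo.inter hVLo, ⟨hxVR, hxVL⟩, ?_⟩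
        rintro σ hσK z ⟨⟨hzV, hzK⟩, hzT⟩
        rcases lt_trichotomy σ.1 z with h | h | h
        · have : σ = σR := hsrcR K hKc σ σR hσK hσRK ⟨z, ⟨hzT, hzK⟩, h⟩ hzR
          exact hVR ⟨hzV.1, this ▸ hzT⟩
        · exact absurd h.symm (hT_ne σ hzT)
        · have : σ = σL := hsrcL K hKc σ σL hσK hσLK ⟨z, ⟨hzT, hzK⟩, h⟩ hzL
          exact hVL ⟨hzV.2, this ▸ hzT⟩
  refine ⟨S', hS'H, fun z hz => Or.inl hz, ?_, ?_, ?_, ?_⟩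
  · -- discreteness
    rintro t (htSH | htT)
    · -- t ∈ S ∩ H : build J and use the hiso-style argument inline later; do it here
      have htS := htSH.1
      have htH := htSH.2
      obtain ⟨U, hUo, hUS⟩ := hSd t htS
      have htU : t ∈ U := by
        have : t ∈ U ∩ S := by rw [hUS]; rfl
        exact this.1
      have hO : (U ∩ ({one}ᶜ ∪ {t})) ∈ nhds t := by
        refine (Filter.inter_mem (hUo.mem_nhds htU) ?_)
        by_cases ht1 : t = one
        · exact Filter.mem_of_superset Filter.univ_mem (fun z _ => by
            by_cases hz1 : z = one
            · subst ht1; exact Or.inr (by rw [hz1]; rfl)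
            · exact Or.inl hz1)
        · have : IsOpen ({one}ᶜ : Set G) := isOpen_compl_singleton
          exact Filter.mem_of_superset (this.mem_nhds ht1) (fun z hz => Or.inl hz)
      obtain ⟨J, hJ1, hJ2, hJ3, hJ4⟩ := exists_ordConnected_nbhd hO
      have hJD' : J ∩ (S ∪ {one}) ⊆ {t} := by
        rintro z ⟨hzJ, hzD⟩
        rcases hzD with hzS | hz1
        · have : z ∈ U ∩ S := ⟨(hJ4 hzJ).1, hzS⟩
          rw [hUS] at this
          exact this
        · rcases (hJ4 hzJ).2 with h | h
          · exact absurd hz1 h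
          · exact h
      -- now the covering argument
      have hxs : ∀ σ : ↥(S \ H), t ≠ σ.1 := fun σ h => σ.2.2 (h ▸ htH)
      obtain ⟨V, hVo, htV, hV⟩ := hcover J hJ3 t hJ2 hxs
      refine ⟨J ∩ V, hJ1.inter hVo, ?_⟩
      apply Set.Subset.antisymm
      · rintro z ⟨⟨hzJ, hzV⟩, hzS⟩
        rcases hzS with (hz | hz) | hz
        · exact hJD' ⟨hzJ, Or.inl hz.1⟩
        · obtain ⟨σ, hzT⟩ := Set.mem_iUnion.mp hz
          have hσJ : σ.1 ∉ J := by
            intro hmem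
            have := hJD' ⟨hmem, Or.inl σ.2.1⟩
            rw [Set.mem_singleton_iff] at this
            exact hxs σ this.symm
          exact hV σ hσJ ⟨⟨hzV, hzJ⟩, hzT⟩
        · exact hJD' ⟨hzJ, Or.inr hz⟩
      · rintro z hzt
        rw [Set.mem_singleton_iff] at hzt
        subst hzt
        exact ⟨⟨hJ2, htV⟩, Or.inl (Or.inl htSH)⟩
    · -- t ∈ ⋃ Tf σ
      obtain ⟨σ₀, htT0⟩ := Set.mem_iUnion.mp htT
      have htH : t ∈ H := hT_H σ₀ htT0
      have hxs : ∀ σ : ↥(S \ H), t ≠ σ.1 := fun σ h => σ.2.2 (h ▸ htH)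
      obtain ⟨V, hVo, htV, hV⟩ := hcover (Jf σ₀) (hJc σ₀) t (hT_J σ₀ htT0) hxs
      obtain ⟨Ut, hUto, hUtT⟩ := hTiso σ₀ t htT0
      have htUt : t ∈ Ut := by
        have : t ∈ Ut ∩ Tf σ₀ := by rw [hUtT]; rfl
        exact this.1
      refine ⟨Jf σ₀ ∩ V ∩ Ut, ((hJo σ₀).inter hVo).inter hUto, ?_⟩
      apply Set.Subset.antisymm
      · rintro z ⟨⟨⟨hzJ, hzV⟩, hzU⟩, hzS⟩
        rcases hzS with (hz | hz) | hz
        · -- z ∈ S ∩ H inside Jf σ₀ : impossible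
          have := hJD σ₀ ⟨hzJ, Or.inl hz.1⟩
          rw [Set.mem_singleton_iff] at this
          exact absurd (this ▸ hz.2) σ₀.2.2
        · obtain ⟨τ, hzT⟩ := Set.mem_iUnion.mp hz
          by_cases hτJ : τ.1 ∈ Jf σ₀
          · have := hJD σ₀ ⟨hτJ, Or.inl τ.2.1⟩
            rw [Set.mem_singleton_iff] at this
            have hττ : τ = σ₀ := Subtype.ext this
            subst hττ
            have : z ∈ Ut ∩ Tf τ := ⟨hzU, hzT⟩
            rw [hUtT] at this
            exact this
          · exact hV τ hτJ ⟨⟨hzV, hzJ⟩, hzT⟩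
        · -- z = one inside Jf σ₀ : impossible
          have h2 := hJD σ₀ ⟨hzJ, Or.inr hz⟩
          rw [Set.mem_singleton_iff] at h2
          have hz1 : z = one := hz
          refine absurd ?_ σ₀.2.2
          rw [← h2, hz1]
          exact hH1
      · rintro z hzt
        rw [Set.mem_singleton_iff] at hzt
        subst hzt
        exact ⟨⟨⟨hT_J σ₀ htT0, htV⟩, htUt⟩, Or.inl (Or.inr (Set.mem_iUnion.mpr ⟨σ₀, htT0⟩))⟩
  · -- closure control
    intro y hy
    by_cases hyS : y ∈ S' ∪ (S ∪ {one})
    · exact hyS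
    · exfalso
      have hyD : y ∉ (S ∪ {one} : Set G) := fun h => hyS (Or.inr h)
      have hyS' : y ∉ S' := fun h => hyS (Or.inl h)
      have hO : (S ∪ {one} : Set G)ᶜ ∈ nhds y := hDcl.isOpen_compl.mem_nhds hyD
      obtain ⟨K, hK1, hK2, hK3, hK4⟩ := exists_ordConnected_nbhd hO
      have hxs : ∀ σ : ↥(S \ H), y ≠ σ.1 := by
        intro σ h
        exact (hK4 hK2) (h ▸ Or.inl σ.2.1)
      obtain ⟨V, hVo, hyV, hV⟩ := hcover K hK3 y hK2 hxs
      have hdisj : (K ∩ V) ∩ S' = ∅ := by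
        apply Set.eq_empty_iff_forall_notMem.mpr
        rintro z ⟨⟨hzK, hzV⟩, hzS⟩
        rcases hzS with hz | hz
        · exact (hK4 hzK) (Or.inl hz.1)
        · obtain ⟨τ, hzT⟩ := Set.mem_iUnion.mp hz
          have hτK : τ.1 ∉ K := fun hmem => (hK4 hmem) (Or.inl τ.2.1)
          have hzy := hV τ hτK ⟨⟨hzV, hzK⟩, hzT⟩
          rw [Set.mem_singleton_iff] at hzy
          apply hyS'
          rw [← hzy]
          exact Or.inr (Set.mem_iUnion.mpr ⟨τ, hzT⟩)
      rw [mem_closure_iff] at hy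
      obtain ⟨z, hz1, hz2⟩ := hy (K ∩ V) (hK1.inter hVo) ⟨hK2, hyV⟩
      exact Set.eq_empty_iff_forall_notMem.mp hdisj z ⟨hz1, hz2⟩
  · -- density
    have hKsub : IsSubgyrogroup (closure (generatedSubgyrogroup S')) :=
      isSubgyrogroup_closure hc (isSubgyrogroup_generated S')
    have hSsubK : S ⊆ closure (generatedSubgyrogroup S') := by
      intro s hsS
      by_cases hsH : s ∈ H
      · exact subset_closure (subset_generatedSubgyrogroup S' (Or.inl ⟨hsS, hsH⟩))
      · have : s ∈ closure (Tf ⟨s, hsS, hsH⟩) := hTclmem ⟨s, hsS, hsH⟩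
        refine closure_mono ?_ this
        refine Set.Subset.trans ?_ (subset_generatedSubgyrogroup S')
        intro z hz
        exact Or.inr (Set.mem_iUnion.mpr ⟨⟨s, hsS, hsH⟩, hz⟩)
    have hgen : generatedSubgyrogroup S ⊆ closure (generatedSubgyrogroup S') :=
      generatedSubgyrogroup_subset hKsub hSsubK
    have huniv : (Set.univ : Set G) ⊆ closure (generatedSubgyrogroup S') := by
      intro z hz
      have h1 : z ∈ closure (generatedSubgyrogroup S) := hSg trivial
      have h2 : closure (generatedSubgyrogroup S) ⊆
          closure (closure (generatedSubgyrogroup S')) := closure_mono hgen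
      rw [closure_closure] at h2
      exact h2 h1
    exact fun z _ => huniv trivial
  · -- the generic isolator
    intro x hxH J hJ1 hJ2 hJ3 hJ4
    have hxs : ∀ σ : ↥(S \ H), x ≠ σ.1 := fun σ h => σ.2.2 (h ▸ hxH)
    obtain ⟨V, hVo, hxV, hV⟩ := hcover J hJ2 x hJ3 hxs
    refine ⟨J ∩ V, hJ1.inter hVo, fun z hz => hz.1, ?_⟩
    apply Set.Subset.antisymm
    · rintro z ⟨⟨hzJ, hzV⟩, hzS⟩
      rcases hzS with (hz | hz) | hz
      · exact hJ4 ⟨hzJ, Or.inl hz.1⟩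
      · obtain ⟨τ, hzT⟩ := Set.mem_iUnion.mp hz
        have hτJ : τ.1 ∉ J := by
          intro hmem
          have := hJ4 ⟨hmem, Or.inl τ.2.1⟩
          rw [Set.mem_singleton_iff] at this
          exact hxs τ this.symm
        exact hV τ hτJ ⟨⟨hzV, hzJ⟩, hzT⟩
      · exact hz
    · rintro z hzt
      rw [Set.mem_singleton_iff] at hzt
      subst hzt
      exact ⟨⟨hJ3, hxV⟩, Or.inr rfl⟩

end Gyrogroup
/-- If a strongly topologically orderable gyrogroup has a (closed) suitable set, then
so does every dense subgyrogroup. -/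
theorem stmt19 {G : Type u} [Gyrogroup G] [TopologicalSpace G]
    (hG : StronglyTopologicallyOrderable G)
    (H : Set G) (hH : IsSubgyrogroup H) (hd : Dense H) :
    ((∃ S : Set G, IsSuitableSetIn Set.univ S) →
        ∃ S : Set G, IsSuitableSetIn H S) ∧
    ((∃ S : Set G, IsSuitableSetIn Set.univ S ∧ IsClosed S) →
        ∃ S : Set G, IsSuitableSetIn H S ∧ closure S ∩ H ⊆ S) := by
  classical
  obtain ⟨⟨hc, 𝒰, hU1, hU2, hU3⟩, l, hlt⟩ := hG
  letI := l
  haveI hOT : OrderTopology G := ⟨hlt⟩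
  have hB : GyrBase 𝒰 := ⟨hU1, hU2, hU3⟩
  have hH1 : (one : G) ∈ H := hH.2.1
  have key : ∀ S : Set G, IsSuitableSetIn Set.univ S →
      ∃ S' : Set G, S' ⊆ H ∧ S ∩ H ⊆ S' ∧
        (∀ t ∈ S', ∃ U : Set G, IsOpen U ∧ U ∩ (S' ∪ {one}) = {t}) ∧
        (closure S' ⊆ S' ∪ (S ∪ {one})) ∧
        (H ⊆ closure (generatedSubgyrogroup S')) ∧
        (∀ x ∈ H, ∀ J : Set G, IsOpen J → J.OrdConnected → x ∈ J →
          J ∩ (S ∪ {one}) ⊆ {x} → ∃ U : Set G, IsOpen U ∧ U ⊆ J ∧ U ∩ (S' ∪ {x}) = {x}) :=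
    fun S hS => master hc hB hH1 hd hS
  have hclosure_bound : ∀ (S S' : Set G), closure S' ⊆ S' ∪ (S ∪ {one}) → (S ∩ H ⊆ S') →
      closure (S' ∪ {one}) ∩ H ⊆ S' ∪ {one} := by
    intro S S' hM4 hM2
    intro z hz
    have h1 : closure (S' ∪ {one}) ⊆ closure S' ∪ {one} := by
      rw [closure_union, closure_singleton]
    rcases h1 hz.1 with h | h
    · rcases hM4 h with h' | h'
      · exact Or.inl h'
      · rcases h' with h'' | h''
        · exact Or.inl (hM2 ⟨h'', hz.2⟩)
        · exact Or.inr h''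
    · exact Or.inr h
  constructor
  · rintro ⟨S, hS⟩
    obtain ⟨S', hM1, hM2, hM3, hM4, hM5, hM6⟩ := key S hS
    refine ⟨S', hM1, ?_, hclosure_bound S S' hM4 hM2, hM5⟩
    intro x hx
    obtain ⟨U, hUo, hU⟩ := hM3 x hx
    have hxU : x ∈ U := by
      have : x ∈ U ∩ (S' ∪ {one}) := by rw [hU]; rfl
      exact this.1
    refine ⟨U, hUo, ?_⟩
    apply Set.Subset.antisymm
    · intro z hz
      have : z ∈ U ∩ (S' ∪ {one}) := ⟨hz.1, Or.inl hz.2⟩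
      rw [hU] at this
      exact this
    · rintro z hzx
      rw [Set.mem_singleton_iff] at hzx
      subst hzx
      exact ⟨hxU, hx⟩
  · rintro ⟨S, hS, hScl⟩
    obtain ⟨S', hM1, hM2, hM3, hM4, hM5, hM6⟩ := key S hS
    have hunion : (S' ∪ {one}) ∪ ({one} : Set G) = S' ∪ {one} := by
      rw [Set.union_assoc, Set.union_self]
    have hclb := hclosure_bound S S' hM4 hM2
    refine ⟨S' ∪ {one}, ⟨?_, ?_, ?_, ?_⟩, ?_⟩
    · rintro z (hz | hz)
      · exact hM1 hz
      · rw [Set.mem_singleton_iff] at hz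
        rw [hz]
        exact hH1
    · -- discreteness
      rintro x (hx | hx)
      · obtain ⟨U, hUo, hU⟩ := hM3 x hx
        exact ⟨U, hUo, hU⟩
      · rw [Set.mem_singleton_iff] at hx
        subst hx
        by_cases h1S : one ∈ S
        · obtain ⟨U, hUo, hU⟩ := hM3 one (hM2 ⟨h1S, hH1⟩)
          exact ⟨U, hUo, hU⟩
        · -- one ∉ S; use closedness of S
          have h1c : one ∈ (Sᶜ : Set G) := h1S
          obtain ⟨J, hJ1, hJ2, hJ3, hJ4⟩ :=
            exists_ordConnected_nbhd (hScl.isOpen_compl.mem_nhds h1c)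
          have hJD : J ∩ (S ∪ {one}) ⊆ {one} := by
            rintro z ⟨hzJ, hzD⟩
            rcases hzD with hzS | hz1
            · exact absurd hzS (hJ4 hzJ)
            · exact hz1
          obtain ⟨U, hUo, hUJ, hU⟩ := hM6 one hH1 J hJ1 hJ3 hJ2 hJD
          exact ⟨U, hUo, hU⟩
    · -- closure condition for suitability
      intro z hz
      rw [hunion] at hz ⊢
      exact hclb hz
    · -- density
      intro z hz
      have h1 := hM5 hz
      have h2 : closure (generatedSubgyrogroup S') ⊆
          closure (generatedSubgyrogroup (S' ∪ {one})) :=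
        closure_mono (generatedSubgyrogroup_mono Set.subset_union_left)
      exact h2 h1
    · -- closed-suitable extra condition
      exact hclb
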